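/- arXiv:1008.2375 — 2 statements merged into one kernel-verified Lean document; each statement's English description precedes it below -/
import Mathlib

section
/- For all n ≥ 1 and 1 ≤ k ≤ n, the number of valley-marked Dyck paths of semilength n whose first ascent has length k equals the number of increasing ordered trees with n edges whose leaves taken in preorder are increasing and whose root has exactly k children. -/
/-- A Dyck path of semilength `n`, encoded as a list of booleans where `true`
is an up-step `U = (1,1)` and `false` is a down-step `D = (1,-1)`: it has `2n`
steps, never goes below the x-axis, and ends on the x-axis. -/
def IsDyckPath (n : ℕ) (p : List Bool) : Prop :=
  p.length = 2 * n ∧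
    (∀ i : ℕ, (p.take i).count false ≤ (p.take i).count true) ∧
    p.count false = p.count true

/-- The height of the lattice point reached after the first `j` steps. -/
def pathHeight (p : List Bool) (j : ℕ) : ℕ :=
  (p.take j).count true - (p.take j).count false

/-- There is a valley (a `D` step immediately followed by a `U` step) at
position `i`; its valley vertex is the point reached after `i+1` steps. -/
def IsValley (p : List Bool) (i : ℕ) : Prop :=
  p[i]? = some false ∧ p[i + 1]? = some true

/-- A valley-marking of the path `p`: for each valley, a choice of one of the
lattice points between the valley vertex and the x-axis inclusive, i.e. an
integer mark `m` with `0 ≤ m ≤` the height of the valley vertex (and, for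
bookkeeping, the mark is `0` at non-valley positions). -/
def IsValleyMarking (p : List Bool) (m : ℕ → ℕ) : Prop :=
  ∀ i : ℕ, (IsValley p i → m i ≤ pathHeight p (i + 1)) ∧
    (¬ IsValley p i → m i = 0)

/-- The length of the first ascent: the initial maximal run of `U` steps. -/
def firstAscentLength (p : List Bool) : ℕ :=
  (p.takeWhile id).length

inductive OTree : Type where
  | node : ℕ → List OTree → OTree

/-- The label of the root of the tree. -/
def OTree.label : OTree → ℕ
  | .node l _ => l

/-- The (ordered) list of subtrees at the root. -/
def OTree.children : OTree → List OTree
  | .node _ ts => ts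

/-- Labels of all vertices in preorder. -/
def OTree.preorder : OTree → List ℕ
  | .node l ts => l :: (ts.attach.map (fun t => OTree.preorder t.1)).flatten
decreasing_by
  have := List.sizeOf_lt_of_mem t.2
  simp only [OTree.node.sizeOf_spec]
  omega

/-- Labels of the leaves, in preorder (walkaround) order. -/
def OTree.leaves : OTree → List ℕ
  | .node l ts =>
      if ts.isEmpty then [l] else (ts.attach.map (fun t => OTree.leaves t.1)).flatten
decreasing_by
  have := List.sizeOf_lt_of_mem t.2
  simp only [OTree.node.sizeOf_spec]
  omega

/-- Each child's label exceeds its parent's label. -/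
inductive OTree.Increasing : OTree → Prop where
  | node : ∀ (l : ℕ) (ts : List OTree),
      (∀ t ∈ ts, l < t.label) → (∀ t ∈ ts, t.Increasing) →
      OTree.Increasing (.node l ts)

/-- An increasing ordered tree of size `n` (i.e. with `n` edges): an ordered
tree with `n+1` vertices labeled `0,1,...,n` (each label used exactly once, as
recorded by the preorder list of labels), rooted at the vertex labeled `0`,
such that each child's label exceeds its parent's label. -/
def IsIncOrdTree (n : ℕ) (t : OTree) : Prop :=
  t.label = 0 ∧ t.preorder.Perm (List.range (n + 1)) ∧ t.Increasing

/-- The labels of the leaves, taken in preorder, are increasing. -/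
def HasIncLeaves (t : OTree) : Prop :=
  t.leaves.Pairwise (· < ·)

open List

abbrev PT (n k : ℕ) := {pm : List Bool × (ℕ → ℕ) //
  IsDyckPath n pm.1 ∧ IsValleyMarking pm.1 pm.2 ∧ firstAscentLength pm.1 = k}

lemma count_tf (l : List Bool) : l.count true + l.count false = l.length := by
  induction l with
  | nil => simp
  | cons b t ih => cases b <;> simp [List.count_cons] <;> omega

lemma takeWhile_id_rep (a : ℕ) (l : List Bool) :
    takeWhile id (replicate a true ++ l) = replicate a true ++ takeWhile id l := by
  induction a with
  | zero => simp
  | succ a ih => simp [replicate_succ, takeWhile_cons, ih]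

lemma fal_rep (a : ℕ) (l : List Bool) :
    firstAscentLength (replicate a true ++ l) = a + firstAscentLength l := by
  unfold firstAscentLength
  rw [takeWhile_id_rep]; simp

lemma fal_rep_cons_false (a : ℕ) (r : List Bool) :
    firstAscentLength (replicate a true ++ false :: r) = a := by
  rw [fal_rep]; unfold firstAscentLength; simp [takeWhile_cons]

/-- Decomposition of a path with first ascent exactly `k`, `1 ≤ k < p.length`. -/
lemma path_decomp {p : List Bool} {k : ℕ} (hfal : firstAscentLength p = k)
    (hlen : k < p.length) : p = replicate k true ++ false :: p.drop (k + 1) := by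
  have hw : p.takeWhile id = replicate k true := by
    rw [eq_replicate_iff]
    exact ⟨hfal, fun b hb => by simpa using mem_takeWhile_imp hb⟩
  have hsplit : p = replicate k true ++ p.dropWhile id := by
    conv_lhs => rw [← takeWhile_append_dropWhile (p := id) (l := p), hw]
  have hne : p.dropWhile id ≠ [] := by
    intro h
    rw [hsplit, h] at hlen; simp at hlen
  have hhead := head_dropWhile_not id hne
  have hcons : p.dropWhile id = false :: (p.dropWhile id).tail := by
    conv_lhs => rw [← cons_head_tail hne]
    simp at hhead; simp [hhead]
  have hdrop : p.drop (k + 1) = (p.dropWhile id).tail := by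
    conv_lhs => rw [hsplit, hcons]
    rw [show k + 1 = (replicate k true).length + 1 by simp]
    rw [drop_append]
    simp
  rw [hdrop]
  conv_lhs => rw [hsplit, hcons]

/-- first ascent of a Dyck path is at most n -/
lemma fal_le {n k : ℕ} {p : List Bool} (hd : IsDyckPath n p)
    (hfal : firstAscentLength p = k) : k ≤ n := by
  have h1 : p.takeWhile id <+ p := takeWhile_sublist _
  have h2 := h1.count_le true
  have hw : p.takeWhile id = replicate k true := by
    rw [eq_replicate_iff]
    exact ⟨hfal, fun b hb => by simpa using mem_takeWhile_imp hb⟩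
  rw [hw] at h2
  simp at h2
  have := count_tf p
  rcases hd with ⟨hl, _, hc⟩
  omega

-- counting lemmas for  P = replicate k true ++ false :: r
lemma countP_take (k t : ℕ) (r : List Bool) (b : Bool) :
    ((replicate k true ++ false :: r).take (k + 1 + t)).count b
      = (replicate k true ++ [false]).count b + (r.take t).count b := by
  have : replicate k true ++ false :: r = (replicate k true ++ [false]) ++ r := by simp
  rw [this, show k + 1 + t = (replicate k true ++ [false]).length + t by simp,
    take_length_add_append, count_append]

lemma countQ_take (a t : ℕ) (r : List Bool) (b : Bool) :
    ((replicate a true ++ r).take (a + t)).count b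
      = (replicate a true).count b + (r.take t).count b := by
  rw [show a + t = (replicate a true).length + t by simp, take_length_add_append, count_append]

lemma count_take_rep_le {a i : ℕ} (r : List Bool) (h : i ≤ a) (b : Bool) :
    ((replicate a true ++ r).take i).count b = if b then i else 0 := by
  rw [take_append_of_le_length (by simpa), take_replicate]
  cases b <;> simp [count_replicate] <;> omega

-- getElem? lemmas
lemma getP_lt {k i : ℕ} (r : List Bool) (h : i < k) :
    (replicate k true ++ false :: r)[i]? = some true := by
  rw [getElem?_append_left (by simpa), getElem?_replicate, if_pos h]

lemma getP_eq (k : ℕ) (r : List Bool) :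
    (replicate k true ++ false :: r)[k]? = some false := by
  rw [getElem?_append_right (by simp)]
  simp

lemma getP_gt (k t : ℕ) (r : List Bool) :
    (replicate k true ++ false :: r)[k + 1 + t]? = r[t]? := by
  have : replicate k true ++ false :: r = (replicate k true ++ [false]) ++ r := by simp
  rw [this, getElem?_append_right (by simp)]
  simp

lemma getQ_lt {a i : ℕ} (r : List Bool) (h : i < a) :
    (replicate a true ++ r)[i]? = some true := by
  rw [getElem?_append_left (by simpa), getElem?_replicate, if_pos h]

lemma getQ_ge (a t : ℕ) (r : List Bool) :
    (replicate a true ++ r)[a + t]? = r[t]? := by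
  rw [getElem?_append_right (by simp)]
  simp

section Transfer

variable {n a : ℕ} {r : List Bool}

/-- `P = U^(a+1) D r`, `Q = U^a r`. -/

lemma dyck_PQ (hd : IsDyckPath (n + 1) (replicate (a + 1) true ++ false :: r)) :
    IsDyckPath n (replicate a true ++ r) := by
  obtain ⟨hl, hpre, hcnt⟩ := hd
  refine ⟨?_, ?_, ?_⟩
  · simp at hl ⊢; omega
  · intro i
    by_cases hi : i ≤ a
    · rw [count_take_rep_le r hi, count_take_rep_le r hi]; simp
    · have h2 := hpre (a + 2 + (i - a))
      rw [show a + 2 + (i - a) = (a + 1) + 1 + (i - a) by omega] at h2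
      rw [countP_take, countP_take] at h2
      have : i = a + (i - a) := by omega
      rw [this, countQ_take, countQ_take]
      simp [count_replicate] at h2 ⊢
      omega
  · simp [count_append, count_cons, count_replicate] at hcnt ⊢
    omega

lemma dyck_QP (hd : IsDyckPath n (replicate a true ++ r)) :
    IsDyckPath (n + 1) (replicate (a + 1) true ++ false :: r) := by
  obtain ⟨hl, hpre, hcnt⟩ := hd
  refine ⟨?_, ?_, ?_⟩
  · simp at hl ⊢; omega
  · intro i
    by_cases hi : i ≤ a + 1
    · rw [count_take_rep_le (false :: r) hi, count_take_rep_le (false :: r) hi]; simp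
    · have h2 := hpre (a + (i - a - 2))
      rw [countQ_take, countQ_take] at h2
      have : i = (a + 1) + 1 + (i - a - 2) := by omega
      rw [this, countP_take, countP_take]
      simp [count_replicate] at h2 ⊢
      omega
  · simp [count_append, count_cons, count_replicate] at hcnt ⊢
    omega

lemma height_PQ (t : ℕ) :
    pathHeight (replicate a true ++ r) (a + t)
      = pathHeight (replicate (a + 1) true ++ false :: r) (a + 1 + 1 + t) := by
  unfold pathHeight
  rw [countQ_take, countQ_take, countP_take, countP_take]
  simp [count_replicate]
  omega

lemma height_P_top : pathHeight (replicate (a + 1) true ++ false :: r) (a + 2) = a := by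
  unfold pathHeight
  rw [show a + 2 = (a+1) + 1 + 0 by omega, countP_take, countP_take]
  simp [count_replicate]

lemma valley_PQ (t : ℕ) :
    IsValley (replicate a true ++ r) (a + t)
      ↔ IsValley (replicate (a + 1) true ++ false :: r) (a + 2 + t) := by
  unfold IsValley
  rw [getQ_ge, show a + t + 1 = a + (t+1) by omega, getQ_ge,
    show a + 2 + t = (a+1) + 1 + t by omega, getP_gt,
    show (a+1) + 1 + t + 1 = (a+1) + 1 + (t+1) by omega, getP_gt]

lemma not_valley_Q_lt {i : ℕ} (hi : i < a) : ¬ IsValley (replicate a true ++ r) i := by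
  intro h
  have := h.1
  rw [getQ_lt r hi] at this
  simp at this

lemma not_valley_P_lt {i : ℕ} (hi : i < a + 1) :
    ¬ IsValley (replicate (a + 1) true ++ false :: r) i := by
  intro h
  have := h.1
  rw [getP_lt r hi] at this
  simp at this

lemma valley_P_top :
    IsValley (replicate (a + 1) true ++ false :: r) (a + 1) ↔ r[0]? = some true := by
  unfold IsValley
  rw [getP_eq, show a + 1 + 1 = (a+1) + 1 + 0 by omega, getP_gt]
  simp

lemma marking_PQ {m : ℕ → ℕ}
    (hm : IsValleyMarking (replicate (a + 1) true ++ false :: r) m) :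
    IsValleyMarking (replicate a true ++ r) (fun i => if i < a then 0 else m (i + 2)) := by
  intro i
  by_cases hi : i < a
  · exact ⟨fun hv => absurd hv (not_valley_Q_lt hi), fun _ => by simp [hi]⟩
  · have hit : i = a + (i - a) := by omega
    constructor
    · intro hv
      rw [hit, valley_PQ] at hv
      have h1 := (hm (a + 2 + (i - a))).1 hv
      simp only [if_neg hi]
      rw [show i + 2 = a + 2 + (i - a) by omega]
      refine h1.trans (le_of_eq ?_)
      rw [show a + 2 + (i - a) + 1 = (a+1) + 1 + (i - a + 1) by omega,
        ← height_PQ, show a + (i - a + 1) = i + 1 by omega]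
    · intro hv
      rw [hit, valley_PQ] at hv
      have h1 := (hm (a + 2 + (i - a))).2 hv
      simp only [if_neg hi]
      rw [show i + 2 = a + 2 + (i - a) by omega]
      exact h1

lemma marking_QP {m' : ℕ → ℕ} {b : ℕ} (hb : b ≤ a)
    (hb0 : r[0]? = some true ∨ b = 0)
    (hm : IsValleyMarking (replicate a true ++ r) m') :
    IsValleyMarking (replicate (a + 1) true ++ false :: r)
      (fun i => if i < a + 1 then 0 else if i = a + 1 then b else m' (i - 2)) := by
  intro i
  by_cases hi : i < a + 1
  · exact ⟨fun hv => absurd hv (not_valley_P_lt hi), fun _ => by simp [hi]⟩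
  · by_cases hie : i = a + 1
    · subst hie
      constructor
      · intro _
        simp only [if_neg hi, if_pos rfl]
        rw [show a + 1 + 1 = a + 2 by omega, height_P_top]
        exact hb
      · intro hv
        rw [valley_P_top] at hv
        simp only [if_neg hi, if_pos rfl]
        rcases hb0 with h | h
        · exact absurd h hv
        · exact h
    · have hit : i = a + 2 + (i - a - 2) := by omega
      constructor
      · intro hv
        rw [hit, ← valley_PQ] at hv
        have h1 := (hm (a + (i - a - 2))).1 hv
        simp only [if_neg hi, if_neg hie]
        rw [show i - 2 = a + (i - a - 2) by omega]
        refine h1.trans (le_of_eq ?_)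
        rw [show a + (i - a - 2) + 1 = a + (i - a - 2 + 1) by omega, height_PQ,
          show a + 1 + 1 + (i - a - 2 + 1) = i + 1 by omega]
      · intro hv
        rw [hit, ← valley_PQ] at hv
        have h1 := (hm (a + (i - a - 2))).2 hv
        simp only [if_neg hi, if_neg hie]
        rw [show i - 2 = a + (i - a - 2) by omega]
        exact h1

end Transfer

section PathEquiv

lemma fal_zero_iff (r : List Bool) : firstAscentLength r = 0 ↔ ¬ r[0]? = some true := by
  cases r with
  | nil => simp [firstAscentLength]
  | cons b t => cases b <;> simp [firstAscentLength, takeWhile_cons]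

lemma take_of_fal_ge {q : List Bool} {a : ℕ} (h : a ≤ firstAscentLength q) :
    q = replicate a true ++ q.drop a := by
  have h1 : q.take a = replicate a true := by
    rw [eq_replicate_iff]
    constructor
    · rw [length_take]
      have : firstAscentLength q ≤ q.length := by
        unfold firstAscentLength
        exact (takeWhile_sublist _).length_le
      omega
    · intro b hb
      have h2 : q.take a = (q.takeWhile id).take a := by
        conv_lhs => rw [← takeWhile_append_dropWhile (p := id) (l := q)]
        rw [take_append_of_le_length h]
      rw [h2] at hb
      have := mem_takeWhile_imp (mem_of_mem_take hb)
      simpa using this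
  conv_lhs => rw [← take_append_drop a q, h1]

lemma get_of_lt_fal {q : List Bool} {i : ℕ} (h : i < firstAscentLength q) :
    q[i]? = some true := by
  rw [take_of_fal_ge (show i + 1 ≤ _ from h)]
  exact getQ_lt _ (by omega)

lemma drop_rep (a : ℕ) (r : List Bool) : (replicate a true ++ r).drop a = r := by
  have := drop_left (l₁ := replicate a true) (l₂ := r)
  simpa using this

lemma dropP (a : ℕ) (r : List Bool) :
    (replicate (a + 1) true ++ false :: r).drop (a + 2) = r := by
  have : replicate (a+1) true ++ false :: r = (replicate (a+1) true ++ [false]) ++ r := by simp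
  rw [this]
  have := drop_left (l₁ := replicate (a+1) true ++ [false]) (l₂ := r)
  simpa using this

abbrev SP (n k : ℕ) := (j : {j : ℕ // k ≤ j}) × PT n j.1

lemma PT.ext' {n k : ℕ} {x y : PT n k} (h : x.1 = y.1) : x = y := Subtype.ext h

lemma getQ_self (a : ℕ) (s : List Bool) : (replicate a true ++ s)[a]? = s[0]? := by
  simpa using getQ_ge a 0 s

lemma SP.ext' {n k : ℕ} {x y : SP n k} (h : x.2.1 = y.2.1) : x = y := by
  obtain ⟨j1, x1⟩ := x
  obtain ⟨j2, y1⟩ := y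
  simp only at h
  have hj : j1 = j2 := by
    refine Subtype.ext ?_
    rw [← x1.2.2.2, ← y1.2.2.2, h]
  subst hj
  have : x1 = y1 := Subtype.ext h
  subst this
  rfl

def pathUp (a b : ℕ) (q : List Bool × (ℕ → ℕ)) : List Bool × (ℕ → ℕ) :=
  (replicate (a + 1) true ++ false :: q.1.drop a,
   fun i => if i < a + 1 then 0 else if i = a + 1 then b else q.2 (i - 2))

def pathDown (a : ℕ) (p : List Bool × (ℕ → ℕ)) : List Bool × (ℕ → ℕ) :=
  (replicate a true ++ p.1.drop (a + 2),
   fun i => if i < a then 0 else p.2 (i + 2))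

lemma PT_decomp {n a : ℕ} (x : PT (n + 1) (a + 1)) :
    x.1.1 = replicate (a + 1) true ++ false :: x.1.1.drop (a + 2) := by
  obtain ⟨⟨p, m⟩, ⟨hd, hm, hf⟩⟩ := x
  have hle := fal_le hd hf
  exact path_decomp hf (by rw [hd.1]; omega)

lemma pathDown_spec {n a : ℕ} (x : PT (n + 1) (a + 1)) :
    IsDyckPath n (pathDown a x.1).1 ∧
    IsValleyMarking (pathDown a x.1).1 (pathDown a x.1).2 ∧
    firstAscentLength (pathDown a x.1).1
      = a + firstAscentLength (x.1.1.drop (a + 2)) := by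
  have hP := PT_decomp x
  obtain ⟨⟨p, m⟩, ⟨hd, hm, hf⟩⟩ := x
  simp only at hP
  obtain ⟨r, hr⟩ : ∃ r, p = replicate (a + 1) true ++ false :: r := ⟨_, hP⟩
  subst hr
  simp only at hd hm
  simp only [pathDown]
  rw [dropP]
  exact ⟨dyck_PQ hd, marking_PQ hm, fal_rep a r⟩

lemma pathUp_spec {n a b : ℕ} (q : List Bool × (ℕ → ℕ)) (hd : IsDyckPath n q.1)
    (hm : IsValleyMarking q.1 q.2) (hb : b ≤ a)
    (hfal : a ≤ firstAscentLength q.1)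
    (hb0 : q.1[a]? = some true ∨ b = 0) :
    IsDyckPath (n + 1) (pathUp a b q).1 ∧
    IsValleyMarking (pathUp a b q).1 (pathUp a b q).2 ∧
    firstAscentLength (pathUp a b q).1 = a + 1 := by
  obtain ⟨ql, qm⟩ := q
  simp only at hd hm hfal hb0 ⊢
  obtain ⟨s, hs⟩ : ∃ s, ql = replicate a true ++ s := ⟨_, take_of_fal_ge hfal⟩
  subst hs
  rw [getQ_self] at hb0
  simp only [pathUp, drop_rep]
  exact ⟨dyck_QP hd, marking_QP hb hb0 hm, fal_rep_cons_false _ _⟩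

lemma mark_top_le {n a : ℕ} (x : PT (n + 1) (a + 1))
    (h : (x.1.1.drop (a + 2))[0]? = some true) : x.1.2 (a + 1) ≤ a := by
  have hP := PT_decomp x
  obtain ⟨⟨p, m⟩, ⟨hd, hm, hf⟩⟩ := x
  simp only at hP h ⊢
  obtain ⟨r, hr⟩ : ∃ r, p = replicate (a + 1) true ++ false :: r := ⟨_, hP⟩
  subst hr
  rw [dropP] at *
  have hv : IsValley (replicate (a + 1) true ++ false :: r) (a + 1) :=
    valley_P_top.2 h
  have := (hm (a + 1)).1 hv
  rwa [show a + 1 + 1 = a + 2 by omega, height_P_top] at this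

def pathToFun (n a : ℕ) (x : PT (n + 1) (a + 1)) :
    PT n a ⊕ Fin (a + 1) × SP n (a + 1) :=
  if h : (x.1.1.drop (a + 2))[0]? = some true then
    Sum.inr (⟨x.1.2 (a + 1), by have := mark_top_le x h; omega⟩,
      ⟨⟨firstAscentLength (pathDown a x.1).1, by
          rw [(pathDown_spec x).2.2]
          have h1 : 1 ≤ firstAscentLength (x.1.1.drop (a + 2)) := by
            by_contra hc
            have : firstAscentLength (x.1.1.drop (a + 2)) = 0 := by omega
            exact (fal_zero_iff _).1 this h
          omega⟩,
        ⟨pathDown a x.1, ⟨(pathDown_spec x).1, (pathDown_spec x).2.1, rfl⟩⟩⟩)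
  else
    Sum.inl ⟨pathDown a x.1, ⟨(pathDown_spec x).1, (pathDown_spec x).2.1, by
      rw [(pathDown_spec x).2.2, (fal_zero_iff _).2 h]
      omega⟩⟩

def pathInvFun (n a : ℕ) : (PT n a ⊕ Fin (a + 1) × SP n (a + 1)) → PT (n + 1) (a + 1)
  | Sum.inl ⟨q, hq⟩ => ⟨pathUp a 0 q, by
      have := pathUp_spec q hq.1 hq.2.1 (Nat.zero_le a) (le_of_eq hq.2.2.symm) (Or.inr rfl)
      exact ⟨this.1, this.2.1, this.2.2⟩⟩
  | Sum.inr (b, ⟨⟨j, hj⟩, ⟨q, hq⟩⟩) => ⟨pathUp a b.1 q, by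
      have hfal : a + 1 ≤ firstAscentLength q.1 := by rw [hq.2.2]; exact hj
      have := pathUp_spec q hq.1 hq.2.1 (by omega : b.1 ≤ a) (by omega)
        (Or.inl (get_of_lt_fal hfal))
      exact ⟨this.1, this.2.1, this.2.2⟩⟩

end PathEquiv

section RoundTrip

lemma up_down {a : ℕ} (p : List Bool) (m : ℕ → ℕ)
    (hP : p = replicate (a + 1) true ++ false :: p.drop (a + 2))
    (hm : IsValleyMarking p m) :
    pathUp a (m (a + 1)) (pathDown a (p, m)) = (p, m) := by
  obtain ⟨r, hr⟩ : ∃ r, p = replicate (a + 1) true ++ false :: r := ⟨_, hP⟩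
  subst hr
  simp only [pathUp, pathDown, dropP, drop_rep]
  refine Prod.ext rfl ?_
  funext i
  simp only
  by_cases h1 : i < a + 1
  · rw [if_pos h1]; exact ((hm i).2 (not_valley_P_lt h1)).symm
  · rw [if_neg h1]
    by_cases h2 : i = a + 1
    · rw [if_pos h2, h2]
    · rw [if_neg h2, if_neg (by omega : ¬ i - 2 < a), show i - 2 + 2 = i by omega]

lemma down_up {a b : ℕ} (q : List Bool × (ℕ → ℕ)) (hm : IsValleyMarking q.1 q.2)
    (hfal : a ≤ firstAscentLength q.1) :
    pathDown a (pathUp a b q) = q := by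
  obtain ⟨ql, qm⟩ := q
  simp only at hm hfal
  obtain ⟨s, hs⟩ : ∃ s, ql = replicate a true ++ s := ⟨_, take_of_fal_ge hfal⟩
  subst hs
  simp only [pathUp, pathDown, drop_rep, dropP]
  refine Prod.ext rfl ?_
  funext i
  simp only
  by_cases h1 : i < a
  · rw [if_pos h1]
    exact ((hm i).2 (not_valley_Q_lt h1)).symm
  · rw [if_neg h1, if_neg (by omega : ¬ i + 2 < a + 1), if_neg (by omega : ¬ i + 2 = a + 1),
      show i + 2 - 2 = i by omega]

def pathEquiv (n a : ℕ) : PT (n + 1) (a + 1) ≃ (PT n a ⊕ Fin (a + 1) × SP n (a + 1)) where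
  toFun := pathToFun n a
  invFun := pathInvFun n a
  left_inv := by
    intro x
    have hP := PT_decomp x
    by_cases h : (x.1.1.drop (a + 2))[0]? = some true
    · simp only [pathToFun, dif_pos h, pathInvFun]
      exact PT.ext' (up_down x.1.1 x.1.2 hP x.2.2.1)
    · simp only [pathToFun, dif_neg h, pathInvFun]
      have hm0 : x.1.2 (a + 1) = 0 := by
        refine (x.2.2.1 (a + 1)).2 ?_
        intro hv
        rw [hP] at hv
        exact h (valley_P_top.1 hv)
      have h2 := up_down x.1.1 x.1.2 hP x.2.2.1
      rw [hm0] at h2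
      exact PT.ext' h2
  right_inv := by
    rintro (⟨q, hq⟩ | ⟨b, ⟨⟨j, hj⟩, ⟨q, hq⟩⟩⟩)
    · have hfal : a ≤ firstAscentLength q.1 := le_of_eq hq.2.2.symm
      have hc : ¬ ((pathUp a 0 q).1.drop (a + 2))[0]? = some true := by
        obtain ⟨ql, qm⟩ := q
        obtain ⟨s, hs⟩ : ∃ s, ql = replicate a true ++ s :=
          ⟨_, take_of_fal_ge hfal⟩
        have hfs : firstAscentLength s = 0 := by
          have h2 := hq.2.2
          simp only at h2
          rw [hs, fal_rep] at h2
          omega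
        subst hs
        simp only [pathUp, drop_rep, dropP]
        exact (fal_zero_iff s).1 hfs
      simp only [pathInvFun, pathToFun, dif_neg hc]
      refine (dif_neg hc).trans ?_
      exact congrArg Sum.inl (PT.ext' (down_up q hq.2.1 hfal))
    · have hfal : a + 1 ≤ firstAscentLength q.1 := by rw [hq.2.2]; exact hj
      have hc : ((pathUp a b.1 q).1.drop (a + 2))[0]? = some true := by
        obtain ⟨ql, qm⟩ := q
        obtain ⟨s, hs⟩ : ∃ s, ql = replicate a true ++ s :=
          ⟨_, take_of_fal_ge (le_trans (by omega) hfal)⟩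
        have hs0 : s[0]? = some true := by
          rw [← getQ_self a s, ← hs]
          exact get_of_lt_fal hfal
        subst hs
        simp only [pathUp, drop_rep, dropP]
        exact hs0
      simp only [pathInvFun, pathToFun, dif_pos hc]
      refine (dif_pos hc).trans ?_
      refine congrArg Sum.inr (Prod.ext ?_ ?_)
      · refine Fin.ext ?_
        simp [pathUp]
      · exact SP.ext' (down_up q hq.2.1 (le_trans (by omega) hfal))

section PathBase

def PT00elem : PT 0 0 :=
  ⟨([], fun _ => 0), ⟨⟨by simp, by simp, by simp⟩,
    fun i => ⟨fun hv => by simp [IsValley] at hv, fun _ => rfl⟩, by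
      simp [firstAscentLength]⟩⟩

instance : Unique (PT 0 0) where
  default := PT00elem
  uniq := by
    intro x
    obtain ⟨⟨p, m⟩, ⟨hd, hm, hf⟩⟩ := x
    have hp : p = [] := by
      have := hd.1
      simpa using this
    subst hp
    have hmz : m = fun _ => 0 := by
      funext i
      exact (hm i).2 (by simp [IsValley])
    subst hmz
    rfl

lemma fal_le_length (p : List Bool) : firstAscentLength p ≤ p.length :=
  (takeWhile_sublist _).length_le

instance (k : ℕ) : IsEmpty (PT 0 (k + 1)) := by
  constructor
  intro x
  obtain ⟨⟨p, m⟩, ⟨hd, hm, hf⟩⟩ := x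
  have h1 := fal_le_length p
  have h2 : p.length = 0 := by simpa using hd.1
  have hf' : firstAscentLength p = k + 1 := hf
  omega

instance (n : ℕ) : IsEmpty (PT (n + 1) 0) := by
  constructor
  intro x
  obtain ⟨⟨p, m⟩, ⟨hd, hm, hf⟩⟩ := x
  have h0 : p[0]? = some true := by
    cases p with
    | nil => have := hd.1; simp at this
    | cons b t =>
      cases b
      · have := hd.2.1 1
        simp [count_cons] at this
      · simp
  have hf : firstAscentLength p = 0 := hf
  exact (fal_zero_iff p).1 hf h0

end PathBase

section TreeInfra

open OTree

theorem OTree.ind {P : OTree → Prop}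
    (h : ∀ l ts, (∀ t ∈ ts, P t) → P (.node l ts)) : ∀ t, P t := by
  have key : ∀ n t, sizeOf t ≤ n → P t := by
    intro n
    induction n with
    | zero =>
      intro t ht
      obtain ⟨l, ts⟩ := t
      simp [OTree.node.sizeOf_spec] at ht
    | succ n ih =>
      intro t ht
      obtain ⟨l, ts⟩ := t
      refine h l ts (fun c hc => ih c ?_)
      have := List.sizeOf_lt_of_mem hc
      simp only [OTree.node.sizeOf_spec] at ht
      omega
  exact fun t => key (sizeOf t) t le_rfl

def OTree.omap (f : ℕ → ℕ) : OTree → OTree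
  | .node l ts => .node (f l) (ts.attach.map (fun t => OTree.omap f t.1))
decreasing_by
  have := List.sizeOf_lt_of_mem t.2
  simp only [OTree.node.sizeOf_spec]
  omega

@[simp] lemma label_node (l : ℕ) (ts : List OTree) : (OTree.node l ts).label = l := rfl
@[simp] lemma children_node (l : ℕ) (ts : List OTree) : (OTree.node l ts).children = ts := rfl

lemma preorder_node (l : ℕ) (ts : List OTree) :
    (OTree.node l ts).preorder = l :: (ts.map OTree.preorder).flatten := by
  rw [OTree.preorder, List.attach_map_val]

lemma leaves_node (l : ℕ) (ts : List OTree) :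
    (OTree.node l ts).leaves
      = if ts.isEmpty then [l] else (ts.map OTree.leaves).flatten := by
  rw [OTree.leaves, List.attach_map_val]

lemma omap_node (f : ℕ → ℕ) (l : ℕ) (ts : List OTree) :
    (OTree.node l ts).omap f = OTree.node (f l) (ts.map (OTree.omap f)) := by
  rw [OTree.omap, List.attach_map_val]

lemma preorder_omap (f : ℕ → ℕ) (t : OTree) :
    (t.omap f).preorder = t.preorder.map f := by
  induction t using OTree.ind with
  | h l ts ih =>
    rw [omap_node, preorder_node, preorder_node]
    simp only [List.map_cons, List.map_flatten, List.map_map]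
    congr 1
    congr 1
    refine List.map_congr_left (fun c hc => ?_)
    exact ih c hc

lemma leaves_omap (f : ℕ → ℕ) (t : OTree) :
    (t.omap f).leaves = t.leaves.map f := by
  induction t using OTree.ind with
  | h l ts ih =>
    rw [omap_node, leaves_node, leaves_node]
    by_cases h : ts.isEmpty
    · have hts : ts = [] := List.isEmpty_iff.1 h
      subst hts
      simp
    · rw [if_neg (by simpa using h), if_neg h]
      simp only [List.map_flatten, List.map_map]
      congr 1
      refine List.map_congr_left (fun c hc => ?_)
      exact ih c hc

lemma omap_omap (f g : ℕ → ℕ) (t : OTree) :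
    (t.omap g).omap f = t.omap (fun x => f (g x)) := by
  induction t using OTree.ind with
  | h l ts ih =>
    rw [omap_node, omap_node, omap_node]
    simp only [List.map_map]
    congr 1
    refine List.map_congr_left (fun c hc => ?_)
    exact ih c hc

lemma omap_congr_id {f : ℕ → ℕ} {t : OTree} (h : ∀ x ∈ t.preorder, f x = x) :
    t.omap f = t := by
  induction t using OTree.ind with
  | h l ts ih =>
    rw [omap_node]
    rw [preorder_node] at h
    congr 1
    · exact h l (by simp)
    · conv_rhs => rw [← List.map_id ts]
      refine List.map_congr_left (fun c hc => ?_)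
      rw [ih c hc (fun x hx => h x ?_)]
      · rfl
      · simp only [List.mem_cons]
        exact Or.inr (List.mem_flatten.2 ⟨c.preorder, List.mem_map_of_mem hc, hx⟩)

lemma label_mem_preorder (t : OTree) : t.label ∈ t.preorder := by
  obtain ⟨l, ts⟩ := t
  rw [preorder_node]
  simp

lemma preorder_ne_nil (t : OTree) : t.preorder ≠ [] := by
  obtain ⟨l, ts⟩ := t
  rw [preorder_node]
  simp

lemma leaves_ne_nil (t : OTree) : t.leaves ≠ [] := by
  induction t using OTree.ind with
  | h l ts ih =>
    rw [leaves_node]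
    by_cases h : ts.isEmpty
    · simp [h]
    · rw [if_neg h]
      intro hc
      obtain ⟨c, hcts⟩ : ∃ c, c ∈ ts := by
        cases ts with
        | nil => simp at h
        | cons a t => exact ⟨a, by simp⟩
      have hnil : c.leaves = [] :=
        List.flatten_eq_nil_iff.1 hc _ (List.mem_map_of_mem hcts)
      exact ih c hcts hnil

lemma Increasing.le_of_mem_preorder {t : OTree} (ht : t.Increasing) :
    ∀ x ∈ t.preorder, t.label ≤ x := by
  induction t using OTree.ind with
  | h l ts ih =>
    cases ht with
    | node _ _ hlt hinc =>
      intro x hx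
      rw [preorder_node] at hx
      simp only [List.mem_cons, List.mem_flatten] at hx
      rcases hx with rfl | ⟨L, hL, hxL⟩
      · exact le_rfl
      · obtain ⟨c, hc, rfl⟩ := List.mem_map.1 hL
        have := ih c hc (hinc c hc) x hxL
        have := hlt c hc
        simp at this ⊢
        omega

lemma mem_preorder_of_mem_leaves {t : OTree} : ∀ x ∈ t.leaves, x ∈ t.preorder := by
  induction t using OTree.ind with
  | h l ts ih =>
    intro x hx
    rw [leaves_node] at hx
    rw [preorder_node]
    by_cases h : ts.isEmpty
    · rw [if_pos h] at hx
      simp at hx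
      simp [hx]
    · rw [if_neg h] at hx
      obtain ⟨L, hL, hxL⟩ := List.mem_flatten.1 hx
      obtain ⟨c, hc, rfl⟩ := List.mem_map.1 hL
      have := ih c hc x hxL
      simp only [List.mem_cons]
      exact Or.inr (List.mem_flatten.2 ⟨c.preorder, List.mem_map_of_mem hc, this⟩)

end TreeInfra

section TreeHelpers

open OTree List

lemma range_succ_succ (n : ℕ) : range (n + 2) = 0 :: 1 :: range' 2 n := by
  rw [range_eq_range']
  rw [show n + 2 = (n + 1) + 1 from rfl, range'_succ, range'_succ]

lemma range_succ' (n : ℕ) : range (n + 1) = 0 :: range' 1 n := by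
  rw [range_eq_range', range'_succ]

lemma map_pred_range' (n : ℕ) : (range' 2 n).map (· - 1) = range' 1 n := by
  have h1 : (range' 1 n).map (fun x => 1 + x) = range' 2 n := map_add_range' (a := 1) 1 n 1
  rw [← h1, List.map_map]
  have : ((fun x : ℕ => x - 1) ∘ fun x => 1 + x) = id := by
    funext x; simp
  rw [this, List.map_id]

lemma map_succ_range' (n : ℕ) : (range' 1 n).map (· + 1) = range' 2 n := by
  have h1 : (range' 1 n).map (fun x => 1 + x) = range' 2 n := map_add_range' (a := 1) 1 n 1
  rw [← h1]
  refine List.map_congr_left (fun x _ => by omega)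

lemma perm_pred {n : ℕ} {D : List ℕ} (h : (1 :: 0 :: D).Perm (range (n + 2))) :
    (0 :: D.map (· - 1)).Perm (range (n + 1)) := by
  rw [range_succ_succ] at h
  have h2 : (1 :: 0 :: D).Perm (1 :: 0 :: range' 2 n) :=
    h.trans (Perm.swap 1 0 _)
  have hD : D.Perm (range' 2 n) := (h2.cons_inv).cons_inv
  rw [range_succ']
  exact (Perm.cons 0 (by rw [← map_pred_range' n]; exact hD.map _))

lemma perm_succ {n : ℕ} {D : List ℕ} (h : (0 :: D).Perm (range (n + 1))) :
    (1 :: 0 :: D.map (· + 1)).Perm (range (n + 2)) := by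
  rw [range_succ'] at h
  have hD : D.Perm (range' 1 n) := h.cons_inv
  rw [range_succ_succ]
  refine Perm.trans ?_ (Perm.swap 0 1 _)
  refine Perm.cons 1 (Perm.cons 0 ?_)
  rw [← map_succ_range' n]
  exact hD.map _

lemma list_decomp {α : Type*} (l : List α) (i : ℕ) (h : i < l.length) :
    l = l.take i ++ l[i] :: l.drop (i + 1) := by
  conv_lhs => rw [← take_append_drop i l]
  rw [getElem_cons_drop h]

lemma list_recomb {α : Type*} (l : List α) (i c : ℕ) :
    l.take i ++ ((l.drop i).take c ++ l.drop (i + c)) = l := by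
  rw [← drop_drop, take_append_drop, take_append_drop]

lemma flatten_map_append (f : OTree → List ℕ) (X Z : List OTree) (y : OTree) :
    ((X ++ y :: Z).map f).flatten
      = (X.map f).flatten ++ (f y ++ (Z.map f).flatten) := by
  simp

lemma flatten_mem {c : OTree} {ts : List OTree} (hc : c ∈ ts) {x : ℕ}
    (hx : x ∈ c.preorder) : x ∈ (ts.map OTree.preorder).flatten :=
  mem_flatten.2 ⟨_, mem_map_of_mem hc, hx⟩

lemma IsIncOrdTree.nodup {n : ℕ} {t : OTree} (h : IsIncOrdTree n t) :
    t.preorder.Nodup :=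
  (h.2.1.nodup_iff).2 nodup_range

lemma child_preorder_pos {n : ℕ} {ts : List OTree} (h : IsIncOrdTree n (.node 0 ts)) :
    ∀ c ∈ ts, ∀ x ∈ c.preorder, 1 ≤ x := by
  have hnd := h.nodup
  rw [preorder_node] at hnd
  have h0 : 0 ∉ (ts.map OTree.preorder).flatten := (nodup_cons.1 hnd).1
  intro c hc x hx
  by_contra hlt
  have hx0 : x = 0 := by omega
  subst hx0
  exact h0 (flatten_mem hc hx)

lemma inc_children {ts : List OTree} {l : ℕ} (h : (OTree.node l ts).Increasing) :
    ∀ c ∈ ts, c.Increasing ∧ l < c.label := by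
  cases h with
  | node _ _ hlt hinc => exact fun c hc => ⟨hinc c hc, hlt c hc⟩

lemma exists_one {n : ℕ} {ts : List OTree} (h : IsIncOrdTree (n + 1) (.node 0 ts)) :
    ∃ c ∈ ts, c.label = 1 := by
  have h1 : (1 : ℕ) ∈ (OTree.node 0 ts).preorder := by
    rw [h.2.1.mem_iff]
    simp [mem_range]
  rw [preorder_node] at h1
  simp only [mem_cons] at h1
  rcases h1 with h1 | h1
  · omega
  · obtain ⟨L, hL, hxL⟩ := mem_flatten.1 h1
    obtain ⟨c, hc, rfl⟩ := mem_map.1 hL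
    refine ⟨c, hc, le_antisymm ?_ ?_⟩
    · exact Increasing.le_of_mem_preorder (inc_children h.2.2 c hc).1 1 hxL
    · exact child_preorder_pos h c hc c.label (label_mem_preorder c)

lemma one_not_elsewhere {n : ℕ} {ts : List OTree} {i : ℕ}
    (h : IsIncOrdTree n (.node 0 ts)) (hi : i < ts.length)
    (h1 : (1 : ℕ) ∈ ts[i].preorder) :
    (∀ c ∈ ts.take i, (1 : ℕ) ∉ c.preorder) ∧
      (∀ c ∈ ts.drop (i + 1), (1 : ℕ) ∉ c.preorder) := by
  have hnd := h.nodup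
  rw [preorder_node] at hnd
  have hfl : (ts.map OTree.preorder).flatten
      = ((ts.take i).map OTree.preorder).flatten
        ++ (ts[i].preorder ++ ((ts.drop (i + 1)).map OTree.preorder).flatten) := by
    conv_lhs => rw [list_decomp ts i hi]
    exact flatten_map_append _ _ _ _
  have hnd2 := (nodup_cons.1 hnd).2
  rw [hfl] at hnd2
  constructor
  · intro c hc hmem
    have hdis := disjoint_of_nodup_append hnd2
    exact hdis (flatten_mem hc hmem) (mem_append_left _ h1)
  · intro c hc hmem
    rw [← append_assoc] at hnd2
    have hdis := disjoint_of_nodup_append hnd2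
    exact hdis (mem_append_right _ h1) (flatten_mem hc hmem)

end TreeHelpers

section TreeSurgery

open OTree List

@[simp] lemma label_omap (f : ℕ → ℕ) (t : OTree) : (t.omap f).label = f t.label := by
  obtain ⟨l, ts⟩ := t
  rw [omap_node]
  rfl

lemma tree_eta (t : OTree) : t = OTree.node t.label t.children := by
  obtain ⟨l, ts⟩ := t; rfl

lemma Increasing.omap_pred {t : OTree} (ht : t.Increasing)
    (hpos : ∀ x ∈ t.preorder, 1 ≤ x) : (t.omap (· - 1)).Increasing := by
  induction t using OTree.ind with
  | h l ts ih =>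
    rw [omap_node]
    have hsub : ∀ c ∈ ts, ∀ x ∈ c.preorder, 1 ≤ x := by
      intro c hc x hx
      refine hpos x ?_
      rw [preorder_node]
      exact mem_cons_of_mem _ (flatten_mem hc hx)
    refine Increasing.node _ _ ?_ ?_
    · intro c' hc'
      obtain ⟨c, hc, rfl⟩ := mem_map.1 hc'
      rw [label_omap]
      have h1 := (inc_children ht c hc).2
      have h2 : 1 ≤ l := hpos l (by rw [preorder_node]; simp)
      omega
    · intro c' hc'
      obtain ⟨c, hc, rfl⟩ := mem_map.1 hc'
      exact ih c hc (inc_children ht c hc).1 (hsub c hc)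

lemma Increasing.omap_succ {t : OTree} (ht : t.Increasing) :
    (t.omap (· + 1)).Increasing := by
  induction t using OTree.ind with
  | h l ts ih =>
    rw [omap_node]
    refine Increasing.node _ _ ?_ ?_
    · intro c' hc'
      obtain ⟨c, hc, rfl⟩ := mem_map.1 hc'
      rw [label_omap]
      have := (inc_children ht c hc).2
      omega
    · intro c' hc'
      obtain ⟨c, hc, rfl⟩ := mem_map.1 hc'
      exact ih c hc (inc_children ht c hc).1

lemma sorted_map_pred {L : List ℕ} (h : L.Pairwise (· < ·))
    (hpos : ∀ x ∈ L, 1 ≤ x) : (L.map (· - 1)).Pairwise (· < ·) := by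
  have h2 := List.Pairwise.and_mem.1 h
  exact List.Pairwise.map _ (fun x y hxy => by
    have := hpos x hxy.1; omega) h2

lemma sorted_map_succ {L : List ℕ} (h : L.Pairwise (· < ·)) :
    (L.map (· + 1)).Pairwise (· < ·) :=
  List.Pairwise.map _ (fun x y hxy => by omega) h

lemma flatten_leaves_omap (f : ℕ → ℕ) (L : List OTree) :
    ((L.map (OTree.omap f)).map OTree.leaves).flatten
      = ((L.map OTree.leaves).flatten).map f := by
  rw [map_map, map_flatten, map_map]
  congr 1
  exact List.map_congr_left (fun c _ => leaves_omap f c)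

lemma flatten_preorder_omap (f : ℕ → ℕ) (L : List OTree) :
    ((L.map (OTree.omap f)).map OTree.preorder).flatten
      = ((L.map OTree.preorder).flatten).map f := by
  rw [map_map, map_flatten, map_map]
  congr 1
  exact List.map_congr_left (fun c _ => preorder_omap f c)

def treeDown (i : ℕ) (t : OTree) : OTree :=
  .node 0 ((t.children.take i
      ++ (((t.children[i]?).getD (.node 0 [])).children ++ t.children.drop (i + 1))).map
    (OTree.omap (· - 1)))

def treeUp (i c : ℕ) (t : OTree) : OTree :=
  .node 0 ((t.children.map (OTree.omap (· + 1))).take i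
    ++ .node 1 (((t.children.map (OTree.omap (· + 1))).drop i).take c)
      :: (t.children.map (OTree.omap (· + 1))).drop (i + c))

end TreeSurgery

section TreeDownSpec

open OTree List

lemma leaves_root_ne {ts : List OTree} (hne : ts ≠ []) :
    (OTree.node 0 ts).leaves = (ts.map OTree.leaves).flatten := by
  rw [leaves_node, if_neg (by simpa using hne)]

lemma leaves_decomp {ts : List OTree} {i : ℕ} (hi : i < ts.length) (hne : ts ≠ []) :
    (OTree.node 0 ts).leaves
      = ((ts.take i).map OTree.leaves).flatten
        ++ (ts[i].leaves ++ ((ts.drop (i + 1)).map OTree.leaves).flatten) := by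
  rw [leaves_root_ne hne]
  conv_lhs => rw [list_decomp ts i hi]
  exact flatten_map_append _ _ _ _

lemma one_first {n i : ℕ} {ts ds : List OTree}
    (hio : IsIncOrdTree (n + 1) (.node 0 ts))
    (hlv : HasIncLeaves (.node 0 ts))
    (hi : i < ts.length) (hts : ts[i] = OTree.node 1 ds) (hds : ds = []) : i = 0 := by
  by_contra hne
  have hne' : ts ≠ [] := by intro h; rw [h] at hi; simp at hi
  have hld := leaves_decomp hi hne'
  rw [hts, hds] at hld
  have h1 : (OTree.node 1 ([] : List OTree)).leaves = [1] := by
    rw [leaves_node]; simp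
  rw [h1] at hld
  have htk : ts.take i ≠ [] := by
    intro h
    have := congrArg List.length h
    rw [length_take] at this
    simp only [length_nil] at this
    omega
  obtain ⟨c0, hc0⟩ := List.exists_mem_of_ne_nil _ htk
  have hlne := leaves_ne_nil c0
  have hLA : ((ts.take i).map OTree.leaves).flatten ≠ [] := by
    intro h
    exact hlne (flatten_eq_nil_iff.1 h _ (mem_map_of_mem hc0))
  obtain ⟨y, hy⟩ := List.exists_mem_of_ne_nil _ hLA
  have hsort := hlv
  unfold HasIncLeaves at hsort
  rw [hld] at hsort
  have hy1 : y < 1 := by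
    have h3 := (pairwise_append.1 hsort).2.2
    exact h3 y hy 1 (by simp)
  obtain ⟨L, hL, hyL⟩ := mem_flatten.1 hy
  obtain ⟨c, hc, rfl⟩ := mem_map.1 hL
  have hcts : c ∈ ts := mem_of_mem_take hc
  have := child_preorder_pos hio c hcts y (mem_preorder_of_mem_leaves y hyL)
  omega

lemma tree_down_spec {n a i : ℕ} {ts ds : List OTree}
    (hio : IsIncOrdTree (n + 1) (.node 0 ts))
    (hlv : HasIncLeaves (.node 0 ts))
    (hlen : ts.length = a + 1)
    (hi : i < ts.length)
    (hts : ts[i] = OTree.node 1 ds) :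
    IsIncOrdTree n (treeDown i (.node 0 ts)) ∧
    HasIncLeaves (treeDown i (.node 0 ts)) ∧
    (treeDown i (.node 0 ts)).children.length = a + ds.length := by
  have hne' : ts ≠ [] := by intro h; rw [h] at hi; simp at hi
  have hsp : treeDown i (.node 0 ts)
      = .node 0 ((ts.take i ++ (ds ++ ts.drop (i + 1))).map (OTree.omap (· - 1))) := by
    unfold treeDown
    rw [children_node, getElem?_eq_getElem hi, hts]
    rfl
  set sp := ts.take i ++ (ds ++ ts.drop (i + 1)) with hspdef
  have h1pre : (1 : ℕ) ∈ ts[i].preorder := by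
    rw [hts]
    have := label_mem_preorder (OTree.node 1 ds)
    simpa using this
  have hone := one_not_elsewhere hio hi h1pre
  have hpos := child_preorder_pos hio
  have hti_mem : ts[i] ∈ ts := List.getElem_mem hi
  have hti_inc : (OTree.node 1 ds).Increasing := by
    rw [← hts]; exact (inc_children hio.2.2 _ hti_mem).1
  have hds_sub : ∀ c ∈ ds, ∀ x ∈ c.preorder, x ∈ ts[i].preorder := by
    intro c hc x hx
    rw [hts, preorder_node]
    exact mem_cons_of_mem _ (flatten_mem hc hx)
  have hfacts : ∀ c ∈ sp, c.Increasing ∧ (∀ x ∈ c.preorder, 1 ≤ x) ∧ 2 ≤ c.label := by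
    intro c hc
    rw [hspdef] at hc
    simp only [mem_append] at hc
    rcases hc with hc | hc | hc
    · have hcts : c ∈ ts := mem_of_mem_take hc
      refine ⟨(inc_children hio.2.2 c hcts).1, hpos c hcts, ?_⟩
      have h1 := hpos c hcts c.label (label_mem_preorder c)
      have h2 : c.label ≠ 1 := by
        intro h
        exact hone.1 c hc (h ▸ label_mem_preorder c)
      omega
    · refine ⟨(inc_children hti_inc c hc).1, ?_, ?_⟩
      · intro x hx
        exact hpos _ hti_mem x (hds_sub c hc x hx)
      · have := (inc_children hti_inc c hc).2
        omega
    · have hcts : c ∈ ts := mem_of_mem_drop hc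
      refine ⟨(inc_children hio.2.2 c hcts).1, hpos c hcts, ?_⟩
      have h1 := hpos c hcts c.label (label_mem_preorder c)
      have h2 : c.label ≠ 1 := by
        intro h
        exact hone.2 c hc (h ▸ label_mem_preorder c)
      omega
  refine ⟨⟨by rw [hsp]; rfl, ?_, ?_⟩, ?_, ?_⟩
  · -- preorder perm
    have hpre_t : (OTree.node 0 ts).preorder
        = 0 :: (((ts.take i).map OTree.preorder).flatten
          ++ ((1 :: (ds.map OTree.preorder).flatten)
            ++ ((ts.drop (i + 1)).map OTree.preorder).flatten)) := by
      rw [preorder_node]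
      congr 1
      conv_lhs => rw [list_decomp ts i hi]
      rw [flatten_map_append, hts, preorder_node]
    have hpre_sp : (sp.map OTree.preorder).flatten
        = ((ts.take i).map OTree.preorder).flatten
          ++ ((ds.map OTree.preorder).flatten
            ++ ((ts.drop (i + 1)).map OTree.preorder).flatten) := by
      rw [hspdef]
      simp
    have hperm1 : (OTree.node 0 ts).preorder.Perm
        (1 :: 0 :: (sp.map OTree.preorder).flatten) := by
      rw [hpre_t, hpre_sp]
      refine Perm.trans (Perm.cons 0 ?_) (Perm.swap 1 0 _)
      have := (List.perm_middle (a := 1)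
        (l₁ := ((ts.take i).map OTree.preorder).flatten)
        (l₂ := (ds.map OTree.preorder).flatten
          ++ ((ts.drop (i + 1)).map OTree.preorder).flatten)).symm
      simpa using this.symm
    have hr : (1 :: 0 :: (sp.map OTree.preorder).flatten).Perm (range (n + 2)) :=
      hperm1.symm.trans hio.2.1
    have := perm_pred hr
    rw [hsp, preorder_node, flatten_preorder_omap]
    exact this
  · -- Increasing
    rw [hsp]
    refine Increasing.node _ _ ?_ ?_
    · intro c' hc'
      obtain ⟨c, hc, rfl⟩ := mem_map.1 hc'
      rw [label_omap]
      have := (hfacts c hc).2.2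
      omega
    · intro c' hc'
      obtain ⟨c, hc, rfl⟩ := mem_map.1 hc'
      exact Increasing.omap_pred (hfacts c hc).1 (hfacts c hc).2.1
  · -- leaves
    by_cases hspe : sp = []
    · rw [hsp, hspe]
      simp [HasIncLeaves, leaves_node]
    · have hlt : (treeDown i (.node 0 ts)).leaves
          = ((sp.map OTree.leaves).flatten).map (· - 1) := by
        rw [hsp, leaves_node, if_neg (by simpa using hspe), flatten_leaves_omap]
      have hLpos : ∀ x ∈ (OTree.node 0 ts).leaves, 1 ≤ x := by
        intro x hx
        rw [leaves_root_ne hne'] at hx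
        obtain ⟨L, hL, hxL⟩ := mem_flatten.1 hx
        obtain ⟨c, hc, rfl⟩ := mem_map.1 hL
        exact hpos c hc x (mem_preorder_of_mem_leaves x hxL)
      unfold HasIncLeaves
      rw [hlt]
      by_cases hds : ds = []
      · have hi0 : i = 0 := one_first hio hlv hi hts hds
        subst hi0
        have hld := leaves_decomp hi hne'
        rw [hts, hds] at hld
        have h1 : (OTree.node 1 ([] : List OTree)).leaves = [1] := by
          rw [leaves_node]; simp
        rw [h1] at hld
        simp only [take_zero, map_nil, flatten_nil, nil_append, singleton_append] at hld
        have hspl : (sp.map OTree.leaves).flatten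
            = ((ts.drop 1).map OTree.leaves).flatten := by
          rw [hspdef, hds]
          simp
        rw [hspl]
        refine sorted_map_pred ?_ ?_
        · have hs := hlv
          unfold HasIncLeaves at hs
          rw [hld] at hs
          exact hs.of_cons
        · intro x hx
          refine hLpos x ?_
          rw [hld]
          exact mem_cons_of_mem _ hx
      · have hld := leaves_decomp hi hne'
        rw [hts] at hld
        have h2 : (OTree.node 1 ds).leaves = (ds.map OTree.leaves).flatten := by
          rw [leaves_node, if_neg (by simpa using hds)]
        rw [h2] at hld
        have hspl : (sp.map OTree.leaves).flatten = (OTree.node 0 ts).leaves := by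
          rw [hld, hspdef]
          simp
        rw [hspl]
        exact sorted_map_pred hlv hLpos
  · -- children length
    rw [hsp, children_node, length_map, length_append, length_append,
      length_take, length_drop, hlen]
    have : i ≤ a := by omega
    omega

end TreeDownSpec

section TreeUpSpec

open OTree List

lemma tree_up_spec {n i c : ℕ} {es : List OTree}
    (hio : IsIncOrdTree n (.node 0 es))
    (hlv : HasIncLeaves (.node 0 es))
    (hic : i + c ≤ es.length)
    (hc0 : c = 0 → i = 0) :
    IsIncOrdTree (n + 1) (treeUp i c (.node 0 es)) ∧
    HasIncLeaves (treeUp i c (.node 0 es)) ∧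
    (treeUp i c (.node 0 es)).children.length = es.length + 1 - c := by
  have hes' : (treeUp i c (.node 0 es))
      = .node 0 ((es.map (OTree.omap (· + 1))).take i
        ++ .node 1 (((es.map (OTree.omap (· + 1))).drop i).take c)
          :: (es.map (OTree.omap (· + 1))).drop (i + c)) := rfl
  set es' := es.map (OTree.omap (· + 1)) with hes'def
  set block := (es'.drop i).take c with hblockdef
  have hles' : es'.length = es.length := by rw [hes'def, length_map]
  have hpos := child_preorder_pos hio
  have hinc := inc_children hio.2.2
  have hmem_es' : ∀ e' ∈ es', ∃ e ∈ es, e' = OTree.omap (· + 1) e := by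
    intro e' he'
    obtain ⟨e, he, rfl⟩ := mem_map.1 he'
    exact ⟨e, he, rfl⟩
  have hrecomb : es'.take i ++ (block ++ es'.drop (i + c)) = es' :=
    list_recomb es' i c
  refine ⟨⟨rfl, ?_, ?_⟩, ?_, ?_⟩
  · -- perm
    have hpre : (treeUp i c (.node 0 es)).preorder
        = 0 :: (((es'.take i).map OTree.preorder).flatten
          ++ ((1 :: (block.map OTree.preorder).flatten)
            ++ (((es'.drop (i + c)).map OTree.preorder).flatten))) := by
      rw [hes', preorder_node]
      congr 1
      rw [flatten_map_append, preorder_node]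
    have hflat : ((es'.take i).map OTree.preorder).flatten
          ++ ((block.map OTree.preorder).flatten
            ++ ((es'.drop (i + c)).map OTree.preorder).flatten)
        = (es'.map OTree.preorder).flatten := by
      conv_rhs => rw [← hrecomb]
      simp
    have hmid := (List.perm_middle (a := 1)
        (l₁ := ((es'.take i).map OTree.preorder).flatten)
        (l₂ := (block.map OTree.preorder).flatten
          ++ ((es'.drop (i + c)).map OTree.preorder).flatten)).symm
    rw [hflat] at hmid
    have hperm1 : (treeUp i c (.node 0 es)).preorder.Perm
        (1 :: 0 :: (es'.map OTree.preorder).flatten) := by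
      rw [hpre]
      exact Perm.trans (Perm.cons 0 hmid.symm) (Perm.swap 1 0 _)
    refine hperm1.trans ?_
    have hbase : ( (0 : ℕ) :: (es.map OTree.preorder).flatten).Perm (range (n + 1)) := by
      have := hio.2.1
      rwa [preorder_node] at this
    have h3 : (es'.map OTree.preorder).flatten
        = ((es.map OTree.preorder).flatten).map (· + 1) := by
      rw [hes'def]
      exact flatten_preorder_omap _ es
    rw [h3]
    exact perm_succ hbase
  · -- Increasing
    rw [hes']
    refine Increasing.node _ _ ?_ ?_
    · intro c' hc'
      simp only [mem_append, mem_cons] at hc'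
      rcases hc' with hc' | hc' | hc'
      · obtain ⟨e, he, rfl⟩ := hmem_es' c' (mem_of_mem_take hc')
        rw [label_omap]; omega
      · rw [hc']; simp
      · obtain ⟨e, he, rfl⟩ := hmem_es' c' (mem_of_mem_drop hc')
        rw [label_omap]; omega
    · intro c' hc'
      simp only [mem_append, mem_cons] at hc'
      rcases hc' with hc' | hc' | hc'
      · obtain ⟨e, he, rfl⟩ := hmem_es' c' (mem_of_mem_take hc')
        exact Increasing.omap_succ (hinc e he).1
      · rw [hc']
        refine Increasing.node _ _ ?_ ?_
        · intro b hb
          obtain ⟨e, he, rfl⟩ := hmem_es' b (mem_of_mem_drop (mem_of_mem_take hb))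
          rw [label_omap]
          have := (hinc e he).2
          omega
        · intro b hb
          obtain ⟨e, he, rfl⟩ := hmem_es' b (mem_of_mem_drop (mem_of_mem_take hb))
          exact Increasing.omap_succ (hinc e he).1
      · obtain ⟨e, he, rfl⟩ := hmem_es' c' (mem_of_mem_drop hc')
        exact Increasing.omap_succ (hinc e he).1
  · -- leaves
    have hlt : (treeUp i c (.node 0 es)).leaves
        = ((es'.take i).map OTree.leaves).flatten
          ++ ((OTree.node 1 block).leaves
            ++ ((es'.drop (i + c)).map OTree.leaves).flatten) := by
      rw [hes', leaves_node, if_neg (by simp)]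
      rw [flatten_map_append]
    have hlpos : ∀ x ∈ ((es.map OTree.leaves).flatten), 1 ≤ x := by
      intro x hx
      obtain ⟨L, hL, hxL⟩ := mem_flatten.1 hx
      obtain ⟨e, he, rfl⟩ := mem_map.1 hL
      exact hpos e he x (mem_preorder_of_mem_leaves x hxL)
    unfold HasIncLeaves
    rw [hlt]
    by_cases hc : c = 0
    · have hi0 : i = 0 := hc0 hc
      subst hi0; subst hc
      have hblock : block = [] := by rw [hblockdef]; simp
      rw [hblock]
      have h1 : (OTree.node 1 ([] : List OTree)).leaves = [1] := by
        rw [leaves_node]; simp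
      rw [h1]
      simp only [take_zero, map_nil, flatten_nil, nil_append, Nat.zero_add,
        singleton_append, drop_zero]
      refine List.pairwise_cons.2 ⟨?_, ?_⟩
      · intro b hb
        rw [hes'def, flatten_leaves_omap] at hb
        obtain ⟨x, hx, rfl⟩ := mem_map.1 hb
        have := hlpos x hx
        omega
      · rw [hes'def, flatten_leaves_omap]
        refine sorted_map_succ ?_
        by_cases hes : es = []
        · subst hes; simp
        · have := hlv
          unfold HasIncLeaves at this
          rwa [leaves_root_ne hes] at this
    · have hblockne : block ≠ [] := by
        rw [hblockdef]
        intro h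
        have := congrArg List.length h
        rw [length_take, length_drop, hles'] at this
        simp only [length_nil] at this
        omega
      have h2 : (OTree.node 1 block).leaves = (block.map OTree.leaves).flatten := by
        rw [leaves_node, if_neg (by simpa using hblockne)]
      rw [h2]
      have hflat : ((es'.take i).map OTree.leaves).flatten
            ++ ((block.map OTree.leaves).flatten
              ++ ((es'.drop (i + c)).map OTree.leaves).flatten)
          = (es'.map OTree.leaves).flatten := by
        conv_rhs => rw [← hrecomb]
        simp
      rw [hflat, hes'def, flatten_leaves_omap]
      refine sorted_map_succ ?_
      have hes : es ≠ [] := by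
        intro h
        rw [h] at hic
        simp at hic
        omega
      have := hlv
      unfold HasIncLeaves at this
      rwa [leaves_root_ne hes] at this
  · -- length
    rw [hes', children_node, length_append, length_cons, length_take, length_drop,
      hles']
    omega

end TreeUpSpec

section TreeRound

open OTree List

lemma take_append_exact {α : Type*} (X Y : List α) (i : ℕ) (h : X.length = i) :
    (X ++ Y).take i = X := by
  subst h; exact take_left (l₁ := X) (l₂ := Y)

lemma drop_append_exact {α : Type*} (X Y : List α) (i : ℕ) (h : X.length = i) :
    (X ++ Y).drop i = Y := by
  subst h; exact drop_left (l₁ := X) (l₂ := Y)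

lemma getElem?_append_exact {α : Type*} (X Y : List α) (y : α) (i : ℕ)
    (h : X.length = i) : (X ++ y :: Y)[i]? = some y := by
  rw [getElem?_append_right (by omega)]
  simp [h]

lemma map_pred_succ (L : List OTree) :
    (L.map (OTree.omap (· + 1))).map (OTree.omap (· - 1)) = L := by
  rw [map_map]
  conv_rhs => rw [← List.map_id L]
  refine List.map_congr_left (fun c _ => ?_)
  show (c.omap (· + 1)).omap (· - 1) = c
  rw [omap_omap]
  exact omap_congr_id (fun x _ => by omega)

lemma map_succ_pred {L : List OTree} (h : ∀ c ∈ L, ∀ x ∈ c.preorder, 1 ≤ x) :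
    (L.map (OTree.omap (· - 1))).map (OTree.omap (· + 1)) = L := by
  rw [map_map]
  conv_rhs => rw [← List.map_id L]
  refine List.map_congr_left (fun c hc => ?_)
  show (c.omap (· - 1)).omap (· + 1) = c
  rw [omap_omap]
  refine omap_congr_id (fun x hx => ?_)
  have := h c hc x hx
  omega

lemma sp_pos {n i : ℕ} {ts ds : List OTree} (hio : IsIncOrdTree n (.node 0 ts))
    (hi : i < ts.length) (hts : ts[i] = OTree.node 1 ds) :
    ∀ c ∈ ts.take i ++ (ds ++ ts.drop (i + 1)), ∀ x ∈ c.preorder, 1 ≤ x := by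
  have hpos := child_preorder_pos hio
  have hti_mem : ts[i] ∈ ts := List.getElem_mem hi
  intro c hc
  simp only [mem_append] at hc
  rcases hc with hc | hc | hc
  · exact hpos c (mem_of_mem_take hc)
  · intro x hx
    refine hpos _ hti_mem x ?_
    rw [hts, preorder_node]
    exact mem_cons_of_mem _ (flatten_mem hc hx)
  · exact hpos c (mem_of_mem_drop hc)

lemma tree_down_up {n i : ℕ} {ts ds : List OTree}
    (hio : IsIncOrdTree n (.node 0 ts))
    (hi : i < ts.length) (hts : ts[i] = OTree.node 1 ds) :
    treeUp i ds.length (treeDown i (.node 0 ts)) = .node 0 ts := by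
  have hsp : (treeDown i (.node 0 ts)).children
      = (ts.take i ++ (ds ++ ts.drop (i + 1))).map (OTree.omap (· - 1)) := by
    unfold treeDown
    rw [children_node, children_node, getElem?_eq_getElem hi, hts]
    rfl
  have hpos := sp_pos hio hi hts
  unfold treeUp
  rw [hsp, map_succ_pred hpos]
  have hlt : (ts.take i).length = i := by
    rw [length_take]; omega
  have h1 : (ts.take i ++ (ds ++ ts.drop (i + 1))).take i = ts.take i :=
    take_append_exact _ _ _ hlt
  have h2 : (ts.take i ++ (ds ++ ts.drop (i + 1))).drop i = ds ++ ts.drop (i + 1) :=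
    drop_append_exact _ _ _ hlt
  have h3 : (ts.take i ++ (ds ++ ts.drop (i + 1))).drop (i + ds.length)
      = ts.drop (i + 1) := by
    rw [show ts.take i ++ (ds ++ ts.drop (i + 1))
        = (ts.take i ++ ds) ++ ts.drop (i + 1) by simp]
    exact drop_append_exact _ _ _ (by rw [length_append, hlt])
  rw [h1, h2, h3, take_append_exact ds _ _ rfl]
  rw [← hts, ← list_decomp ts i hi]

lemma tree_up_down' {i c : ℕ} {es : List OTree} (hic : i + c ≤ es.length) :
    treeDown i (treeUp i c (.node 0 es)) = .node 0 es := by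
  set es' := es.map (OTree.omap (· + 1)) with hes'def
  have hles' : es'.length = es.length := by rw [hes'def, length_map]
  have h1 : (treeUp i c (.node 0 es)).children
      = es'.take i ++ OTree.node 1 ((es'.drop i).take c) :: es'.drop (i + c) := rfl
  have hlt : (es'.take i).length = i := by
    rw [length_take]; omega
  unfold treeDown
  rw [h1]
  rw [take_append_exact _ _ _ hlt, getElem?_append_exact _ _ _ _ hlt]
  have h3 : (es'.take i ++ OTree.node 1 ((es'.drop i).take c) :: es'.drop (i + c)).drop (i + 1)
      = es'.drop (i + c) := by
    rw [show es'.take i ++ OTree.node 1 ((es'.drop i).take c) :: es'.drop (i + c)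
        = (es'.take i ++ [OTree.node 1 ((es'.drop i).take c)]) ++ es'.drop (i + c) by simp]
    exact drop_append_exact _ _ _ (by rw [length_append, hlt]; rfl)
  rw [h3]
  show OTree.node 0 ((es'.take i ++ (((es'.drop i).take c) ++ es'.drop (i + c))).map
    (OTree.omap (· - 1))) = _
  rw [list_recomb es' i c, hes'def, map_pred_succ]

end TreeRound

section TreeEquiv

open OTree List

abbrev TT (n k : ℕ) := {t : OTree //
  IsIncOrdTree n t ∧ HasIncLeaves t ∧ t.children.length = k}

abbrev STT (n k : ℕ) := (j : {j : ℕ // k ≤ j}) × TT n j.1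

lemma TT.ext' {n k : ℕ} {x y : TT n k} (h : x.1 = y.1) : x = y := Subtype.ext h

lemma STT.ext' {n k : ℕ} {x y : STT n k} (h : x.2.1 = y.2.1) : x = y := by
  obtain ⟨j1, x1⟩ := x
  obtain ⟨j2, y1⟩ := y
  simp only at h
  have hj : j1 = j2 := by
    refine Subtype.ext ?_
    rw [← x1.2.2.2, ← y1.2.2.2, h]
  subst hj
  have : x1 = y1 := Subtype.ext h
  subst this
  rfl

lemma node_decomp' {t : OTree} (h : t.label = 0) : t = OTree.node 0 t.children := by
  conv_lhs => rw [tree_eta t]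
  rw [h]

/-- bundled facts about the child with label one -/
lemma findIdx_lt {n a : ℕ} (x : TT (n + 1) (a + 1)) :
    x.1.children.findIdx (fun c => c.label == 1) < x.1.children.length := by
  refine findIdx_lt_length.2 ?_
  have hio : IsIncOrdTree (n + 1) (.node 0 x.1.children) := by
    rw [← node_decomp' x.2.1.1]
    exact x.2.1
  obtain ⟨c, hc, hl⟩ := exists_one hio
  exact ⟨c, hc, by simpa using hl⟩

lemma findIdx_label {n a : ℕ} (x : TT (n + 1) (a + 1)) :
    (x.1.children[x.1.children.findIdx (fun c => c.label == 1)]'(findIdx_lt x)).label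
      = 1 := by
  have := List.findIdx_getElem (w := findIdx_lt x)
  simpa using this

lemma findIdx_node {n a : ℕ} (x : TT (n + 1) (a + 1)) :
    x.1.children[x.1.children.findIdx (fun c => c.label == 1)]'(findIdx_lt x)
      = OTree.node 1
        (x.1.children[x.1.children.findIdx (fun c => c.label == 1)]'(findIdx_lt x)).children := by
  conv_lhs => rw [tree_eta (x.1.children[x.1.children.findIdx (fun c => c.label == 1)]'(findIdx_lt x))]
  rw [findIdx_label x]

lemma getD_children {n a : ℕ} (x : TT (n + 1) (a + 1)) :
    ((x.1.children[x.1.children.findIdx (fun c => c.label == 1)]?).getD (.node 0 []))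
      = x.1.children[x.1.children.findIdx (fun c => c.label == 1)]'(findIdx_lt x) := by
  rw [getElem?_eq_getElem (findIdx_lt x)]
  rfl

lemma down_spec' {n a : ℕ} (x : TT (n + 1) (a + 1)) :
    IsIncOrdTree n (treeDown (x.1.children.findIdx (fun c => c.label == 1)) x.1) ∧
    HasIncLeaves (treeDown (x.1.children.findIdx (fun c => c.label == 1)) x.1) ∧
    (treeDown (x.1.children.findIdx (fun c => c.label == 1)) x.1).children.length
      = a + (((x.1.children[x.1.children.findIdx
          (fun c => c.label == 1)]?).getD (.node 0 [])).children).length := by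
  have hnd := node_decomp' x.2.1.1
  have hio : IsIncOrdTree (n + 1) (.node 0 x.1.children) := hnd ▸ x.2.1
  have hlv : HasIncLeaves (.node 0 x.1.children) := hnd ▸ x.2.2.1
  have h1 := congrArg (treeDown (x.1.children.findIdx (fun c => c.label == 1))) hnd
  rw [h1, getD_children x]
  exact tree_down_spec hio hlv x.2.2.2 (findIdx_lt x) (findIdx_node x)

def treeToFun (n a : ℕ) (x : TT (n + 1) (a + 1)) :
    TT n a ⊕ Fin (a + 1) × STT n (a + 1) :=
  if hds : (((x.1.children[x.1.children.findIdx
        (fun c => c.label == 1)]?).getD (.node 0 [])).children).length = 0 then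
    Sum.inl ⟨treeDown (x.1.children.findIdx (fun c => c.label == 1)) x.1,
      (down_spec' x).1, (down_spec' x).2.1, by rw [(down_spec' x).2.2, hds]; omega⟩
  else
    Sum.inr (⟨x.1.children.findIdx (fun c => c.label == 1), by
        have := findIdx_lt x
        rw [x.2.2.2] at this
        exact this⟩,
      ⟨⟨a + (((x.1.children[x.1.children.findIdx
          (fun c => c.label == 1)]?).getD (.node 0 [])).children).length, by omega⟩,
        ⟨treeDown (x.1.children.findIdx (fun c => c.label == 1)) x.1,
          (down_spec' x).1, (down_spec' x).2.1, (down_spec' x).2.2⟩⟩)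

lemma up_spec' {n : ℕ} (u : OTree) (i c : ℕ)
    (hio : IsIncOrdTree n u) (hlv : HasIncLeaves u)
    (hic : i + c ≤ u.children.length) (hc0 : c = 0 → i = 0) :
    IsIncOrdTree (n + 1) (treeUp i c u) ∧
    HasIncLeaves (treeUp i c u) ∧
    (treeUp i c u).children.length = u.children.length + 1 - c := by
  have hnd := node_decomp' hio.1
  have h1 : treeUp i c u = treeUp i c (.node 0 u.children) := by
    conv_lhs => rw [hnd]
  rw [h1]
  exact tree_up_spec (hnd ▸ hio) (hnd ▸ hlv) hic hc0

def treeInvFun (n a : ℕ) : TT n a ⊕ Fin (a + 1) × STT n (a + 1) → TT (n + 1) (a + 1)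
  | Sum.inl ⟨u, hu⟩ => ⟨treeUp 0 0 u, by
      have := up_spec' u 0 0 hu.1 hu.2.1 (by omega) (fun _ => rfl)
      exact ⟨this.1, this.2.1, by rw [this.2.2, hu.2.2]; omega⟩⟩
  | Sum.inr (b, ⟨⟨j, hj⟩, ⟨u, hu⟩⟩) => ⟨treeUp b.1 (j - a) u, by
      have hlen : u.children.length = j := hu.2.2
      have hb := b.2
      have := up_spec' u b.1 (j - a) hu.1 hu.2.1 (by omega) (by omega)
      exact ⟨this.1, this.2.1, by rw [this.2.2, hlen]; omega⟩⟩

end TreeEquiv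

section TreeEquiv2

open OTree List

lemma toFun_inl {n a : ℕ} (x : TT (n + 1) (a + 1)) (u : TT n a)
    (hx : x.1 = treeUp 0 0 u.1) : treeToFun n a x = Sum.inl u := by
  obtain ⟨u, hu⟩ := u
  simp only at hx
  have hnd := node_decomp' hu.1.1
  have hidx : x.1.children.findIdx (fun c => c.label == 1) = 0 := by
    rw [hx]
    simp [treeUp, findIdx_cons]
  have hget : x.1.children[(0 : ℕ)]? = some (OTree.node 1 []) := by
    rw [hx]
    simp [treeUp]
  have hC : ((x.1.children[x.1.children.findIdx
      (fun c => c.label == 1)]?).getD (.node 0 [])).children.length = 0 := by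
    rw [hidx, hget]
    rfl
  simp only [treeToFun]
  rw [dif_pos hC]
  refine congrArg Sum.inl (TT.ext' ?_)
  simp only
  rw [hidx, hx]
  have hb := congrArg (fun t => treeDown 0 (treeUp 0 0 t)) hnd
  rw [hb]
  exact (tree_up_down' (by omega)).trans hnd.symm

lemma toFun_inr {n a : ℕ} (x : TT (n + 1) (a + 1)) (b : Fin (a + 1))
    (j : ℕ) (hj : a + 1 ≤ j) (u : TT n j)
    (hx : x.1 = treeUp b.1 (j - a) u.1) :
    treeToFun n a x = Sum.inr (b, ⟨⟨j, hj⟩, u⟩) := by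
  obtain ⟨u, hu⟩ := u
  simp only at hx
  have hnd := node_decomp' hu.1.1
  have hlen : u.children.length = j := hu.2.2
  have hb : b.1 ≤ a := by have := b.2; omega
  have hlxc : x.1.children.length = a + 1 := x.2.2.2
  have hlb : b.1 < x.1.children.length := by omega
  have hch : x.1.children
      = (u.children.map (OTree.omap (· + 1))).take b.1
        ++ OTree.node 1 (((u.children.map (OTree.omap (· + 1))).drop b.1).take (j - a))
          :: (u.children.map (OTree.omap (· + 1))).drop (b.1 + (j - a)) := by
    rw [hx]
    rfl
  have hles' : (u.children.map (OTree.omap (· + 1))).length = j := by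
    rw [length_map, hlen]
  have htklen : ((u.children.map (OTree.omap (· + 1))).take b.1).length = b.1 := by
    rw [length_take]
    omega
  have hgetb : x.1.children[b.1]?
      = some (OTree.node 1 (((u.children.map (OTree.omap (· + 1))).drop b.1).take (j - a))) := by
    rw [hch]
    exact getElem?_append_exact _ _ _ _ htklen
  have hIdx : x.1.children.findIdx (fun c => c.label == 1) = b.1 := by
    refine (findIdx_eq hlb).2 ⟨?_, ?_⟩
    · have h1 : some (x.1.children[b.1]'hlb) = x.1.children[b.1]? :=
        (getElem?_eq_getElem hlb).symm
      rw [hgetb] at h1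
      have h2 := Option.some_injective _ h1
      rw [h2]
      simp
    · intro jj hjj
      have h1 : x.1.children[jj]? = (u.children.map (OTree.omap (· + 1)))[jj]? := by
        rw [hch, getElem?_append_left (by omega), getElem?_take, if_pos hjj]
      have hjlt : jj < u.children.length := by omega
      have h2 : (u.children.map (OTree.omap (· + 1)))[jj]?
          = some (OTree.omap (· + 1) (u.children[jj]'hjlt)) := by
        rw [getElem?_map, getElem?_eq_getElem hjlt]
        rfl
      have hjj2 : jj < x.1.children.length := by omega
      have h3 : some (x.1.children[jj]'hjj2) = x.1.children[jj]? :=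
        (getElem?_eq_getElem hjj2).symm
      rw [h1, h2] at h3
      have h4 := Option.some_injective _ h3
      rw [h4, label_omap]
      have hmem : u.children[jj]'hjlt ∈ u.children := getElem_mem hjlt
      have hpos := (inc_children (hnd ▸ hu.1.2.2) _ hmem).2
      simp only [beq_eq_false_iff_ne, ne_eq]
      omega
  have hC : ¬ ((x.1.children[x.1.children.findIdx
      (fun c => c.label == 1)]?).getD (.node 0 [])).children.length = 0 := by
    rw [hIdx, hgetb]
    simp only [Option.getD_some, children_node, length_take, length_drop, hles']
    omega
  simp only [treeToFun]
  rw [dif_neg hC]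
  refine congrArg Sum.inr (Prod.ext (Fin.ext ?_) (STT.ext' ?_))
  · exact hIdx
  · simp only
    rw [hIdx, hx]
    have hb2 := congrArg (fun t => treeDown b.1 (treeUp b.1 (j - a) t)) hnd
    rw [hb2]
    refine (tree_up_down' (by omega)).trans hnd.symm

def treeEquiv (n a : ℕ) : TT (n + 1) (a + 1) ≃ (TT n a ⊕ Fin (a + 1) × STT n (a + 1)) where
  toFun := treeToFun n a
  invFun := treeInvFun n a
  left_inv := by
    intro x
    have hnd := node_decomp' x.2.1.1
    have hio : IsIncOrdTree (n + 1) (.node 0 x.1.children) := hnd ▸ x.2.1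
    have hlv : HasIncLeaves (.node 0 x.1.children) := hnd ▸ x.2.2.1
    have hdx := congrArg (treeDown (x.1.children.findIdx (fun c => c.label == 1))) hnd
    by_cases hds : (((x.1.children[x.1.children.findIdx
        (fun c => c.label == 1)]?).getD (.node 0 [])).children).length = 0
    · simp only [treeToFun, dif_pos hds, treeInvFun]
      refine TT.ext' ?_
      simp only
      rw [getD_children x] at hds
      have hnil : (x.1.children[x.1.children.findIdx
          (fun c => c.label == 1)]'(findIdx_lt x)).children = [] := length_eq_zero_iff.1 hds
      have hi0 : x.1.children.findIdx (fun c => c.label == 1) = 0 :=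
        one_first hio hlv (findIdx_lt x) (findIdx_node x) hnil
      have hlt0 : 0 < x.1.children.length := by
        have := findIdx_lt x
        omega
      have hget0 : x.1.children[(0 : ℕ)]? = some (OTree.node 1 []) := by
        have h1 : x.1.children[x.1.children.findIdx (fun c => c.label == 1)]?
            = some (OTree.node 1 []) := by
          rw [getElem?_eq_getElem (findIdx_lt x)]
          rw [← hnil]
          exact congrArg some (findIdx_node x)
        rwa [hi0] at h1
      have hts0 : x.1.children[0]'hlt0 = OTree.node 1 [] := by
        have := (getElem?_eq_getElem hlt0).symm.trans hget0
        exact Option.some_injective _ this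
      have hud := tree_down_up hio hlt0 hts0
      rw [hi0]
      have hdx0 := congrArg (treeDown 0) hnd
      rw [hdx0]
      exact hud.trans hnd.symm
    · simp only [treeToFun, dif_neg hds, treeInvFun]
      refine TT.ext' ?_
      simp only
      rw [getD_children x]
      have harith : a + (x.1.children[x.1.children.findIdx
          (fun c => c.label == 1)]'(findIdx_lt x)).children.length - a
          = (x.1.children[x.1.children.findIdx
            (fun c => c.label == 1)]'(findIdx_lt x)).children.length := by omega
      rw [harith, hdx]
      exact (tree_down_up hio (findIdx_lt x) (findIdx_node x)).trans hnd.symm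
  right_inv := by
    rintro (⟨u, hu⟩ | ⟨b, ⟨⟨j, hj⟩, ⟨u, hu⟩⟩⟩)
    · exact toFun_inl _ ⟨u, hu⟩ rfl
    · exact toFun_inr _ b j hj ⟨u, hu⟩ rfl

end TreeEquiv2

section TreeBase

open OTree List

def TT00elem : TT 0 0 :=
  ⟨.node 0 [], ⟨rfl, by rw [preorder_node]; simp [List.range_succ], Increasing.node 0 [] (by simp) (by simp)⟩,
    by unfold HasIncLeaves; rw [leaves_node]; simp, rfl⟩

instance : Unique (TT 0 0) where
  default := TT00elem
  uniq := by
    intro x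
    refine (TT.ext' ?_).symm
    show (OTree.node 0 [] : OTree) = x.1
    have hnd := node_decomp' x.2.1.1
    have hch : x.1.children = [] := length_eq_zero_iff.1 x.2.2.2
    rw [hnd, hch]

instance (k : ℕ) : IsEmpty (TT 0 (k + 1)) := by
  constructor
  intro x
  have hperm := x.2.1.2.1
  have hlen := hperm.length_eq
  rw [length_range] at hlen
  have hnd := node_decomp' x.2.1.1
  obtain ⟨c, hc⟩ : ∃ c, c ∈ x.1.children := by
    have h1 : x.1.children.length = k + 1 := x.2.2.2
    cases h : x.1.children with
    | nil => rw [h] at h1; simp at h1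
    | cons y l => exact ⟨y, by simp⟩
  rw [hnd, preorder_node] at hperm
  have hlen2 := hperm.length_eq
  rw [length_range, length_cons] at hlen2
  have hfl : (x.1.children.map OTree.preorder).flatten = [] := by
    have : (x.1.children.map OTree.preorder).flatten.length = 0 := by omega
    exact length_eq_zero_iff.1 this
  have := flatten_eq_nil_iff.1 hfl _ (mem_map_of_mem (f := OTree.preorder) hc)
  exact preorder_ne_nil c this

instance (n : ℕ) : IsEmpty (TT (n + 1) 0) := by
  constructor
  intro x
  have hch : x.1.children = [] := length_eq_zero_iff.1 x.2.2.2
  have hnd := node_decomp' x.2.1.1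
  have hperm := x.2.1.2.1
  rw [hnd, hch, preorder_node] at hperm
  have := hperm.length_eq
  rw [length_range] at this
  simp at this

end TreeBase

def mainEquiv : (n : ℕ) → (k : ℕ) → (PT n k ≃ TT n k)
  | 0, 0 => Equiv.ofUnique _ _
  | 0, _ + 1 => Equiv.equivOfIsEmpty _ _
  | _ + 1, 0 => Equiv.equivOfIsEmpty _ _
  | n + 1, a + 1 =>
    (pathEquiv n a).trans
      ((Equiv.sumCongr (mainEquiv n a)
        ((Equiv.refl (Fin (a + 1))).prodCongr
          ((Equiv.sigmaCongrRight (fun (j : {j : ℕ // a + 1 ≤ j}) => mainEquiv n j.1) : SP n (a+1) ≃ STT n (a+1))))).trans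
        (treeEquiv n a).symm)
termination_by n _ => n


theorem stmt10 (n k : ℕ) (hn : 1 ≤ n) (hk : 1 ≤ k) (hkn : k ≤ n) :
    Nat.card {pm : List Bool × (ℕ → ℕ) //
        IsDyckPath n pm.1 ∧ IsValleyMarking pm.1 pm.2 ∧
          firstAscentLength pm.1 = k}
      = Nat.card {t : OTree //
          IsIncOrdTree n t ∧ HasIncLeaves t ∧ t.children.length = k} := by
  exact Nat.card_congr (mainEquiv n k)
end RoundTrip
end

section
/- For all n ≥ 1, the number of increasing ordered trees with n edges whose leaves taken in preorder are increasing equals the number of Stirling permutations of size n whose plateaus, read from left to right, are increasing. -/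
/-- `l` is a permutation (as a sequence) of the multiset `{1,1,2,2,...,n,n}`. -/
def IsDoubleMultiset (n : ℕ) (l : List ℕ) : Prop :=
  ∀ i : ℕ, l.count i = if 1 ≤ i ∧ i ≤ n then 2 else 0

/-- A Stirling permutation of size `n`: a permutation of `{1,1,2,2,...,n,n}`
such that every entry lying strictly between the two (equal) occurrences of a
value exceeds that value. -/
def IsStirlingPerm (n : ℕ) (l : List ℕ) : Prop :=
  IsDoubleMultiset n l ∧
    ∀ a b c : Fin l.length, a < b → b < c → l.get a = l.get c →
      l.get a < l.get b

/-- A Gessel permutation of size `n`: a permutation of `{1,1,2,2,...,n,n}` in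
which the second occurrence of each value is a right-to-left minimum
(equivalently, the second occurrences of `1,2,...,n` appear in that order). -/
def IsGesselPerm (n : ℕ) (l : List ℕ) : Prop :=
  IsDoubleMultiset n l ∧
    ∀ a c d : Fin l.length, a < c → l.get a = l.get c → c < d →
      l.get c < l.get d

/-- The plateaus of `l` (pairs of adjacent equal entries), read from left to
right, have increasing values. Entries are accessed with `List.getD` (all
indices involved are in range). -/
def HasIncPlateaus (l : List ℕ) : Prop :=
  ∀ i j : ℕ, i < j → j + 1 < l.length →
    l.getD i 0 = l.getD (i + 1) 0 → l.getD j 0 = l.getD (j + 1) 0 →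
    l.getD i 0 < l.getD j 0

namespace SP

def preorderF (ts : List OTree) : List ℕ := (ts.map OTree.preorder).flatten
def leavesF (ts : List OTree) : List ℕ := (ts.map OTree.leaves).flatten

lemma preorder_node (a : ℕ) (ts : List OTree) :
    (OTree.node a ts).preorder = a :: preorderF ts := by
  rw [OTree.preorder, preorderF, List.attach_map_val]

lemma leaves_node (a : ℕ) (ts : List OTree) :
    (OTree.node a ts).leaves = if ts.isEmpty then [a] else leavesF ts := by
  rw [OTree.leaves, leavesF, List.attach_map_val]

def wordT : OTree → List ℕ
  | .node a ts => a :: (ts.attach.map (fun t => wordT t.1)).flatten ++ [a]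
decreasing_by
  have := List.sizeOf_lt_of_mem t.2
  simp only [OTree.node.sizeOf_spec]
  omega

def wordF (ts : List OTree) : List ℕ := (ts.map wordT).flatten

lemma wordT_node (a : ℕ) (ts : List OTree) :
    wordT (.node a ts) = a :: wordF ts ++ [a] := by
  rw [wordT, wordF, List.attach_map_val]

lemma wordF_cons (t : OTree) (F : List OTree) :
    wordF (t :: F) = wordT t ++ wordF F := by
  simp [wordF]

lemma preorderF_cons (t : OTree) (F : List OTree) :
    preorderF (t :: F) = t.preorder ++ preorderF F := by
  simp [preorderF]

lemma leavesF_cons (t : OTree) (F : List OTree) :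
    leavesF (t :: F) = t.leaves ++ leavesF F := by
  simp [leavesF]

lemma label_mem_preorder (t : OTree) : t.label ∈ t.preorder := by
  obtain ⟨a, ts⟩ := t
  rw [preorder_node]
  exact List.mem_cons_self

lemma count_wordF (F : List OTree) (x : ℕ) :
    (wordF F).count x = 2 * (preorderF F).count x := by
  match F with
  | [] => simp [wordF, preorderF]
  | (OTree.node a ts) :: F' =>
    have h1 := count_wordF ts x
    have h2 := count_wordF F' x
    rw [wordF_cons, wordT_node, preorderF_cons, preorder_node]
    rcases eq_or_ne a x with h | h <;>
      simp [List.count_append, List.count_cons, h, h1, h2] <;> omega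
termination_by sizeOf F
decreasing_by
  all_goals simp only [List.cons.sizeOf_spec, OTree.node.sizeOf_spec] <;> omega

lemma count_wordT (t : OTree) (x : ℕ) :
    (wordT t).count x = 2 * t.preorder.count x := by
  have := count_wordF [t] x
  simpa [wordF_cons, preorderF_cons, wordF, preorderF, List.count_append] using this

lemma old_count_wordF (F : List OTree) (x : ℕ) :
    (wordF F).count x = 2 * (preorderF F).count x := by
  induction F with
  | nil => simp [wordF, preorderF]
  | cons t F ih =>
      rw [wordF_cons, preorderF_cons, List.count_append, List.count_append, ih,
        count_wordT]
      ring

lemma mem_wordF_iff (F : List OTree) (x : ℕ) :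
    x ∈ wordF F ↔ x ∈ preorderF F := by
  rw [← List.count_pos_iff, ← List.count_pos_iff, count_wordF]
  omega


lemma increasing_le_preorder_aux : ∀ (m : ℕ) (t : OTree), sizeOf t ≤ m →
    t.Increasing → ∀ x ∈ t.preorder, t.label ≤ x := by
  intro m
  induction m with
  | zero =>
      intro t h
      obtain ⟨a, ts⟩ := t
      simp [OTree.node.sizeOf_spec] at h
  | succ m ih =>
      intro t hm ht x hx
      obtain ⟨a, ts⟩ := t
      rw [preorder_node, List.mem_cons] at hx
      rcases hx with rfl | hx
      · simp [OTree.label]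
      · simp only [preorderF, List.mem_flatten, List.mem_map] at hx
        obtain ⟨l, ⟨t', ht', rfl⟩, hxl⟩ := hx
        cases ht with
        | node _ _ hlab hrec =>
          have hsz : sizeOf t' ≤ m := by
            have h1 := List.sizeOf_lt_of_mem ht'
            simp only [OTree.node.sizeOf_spec] at hm
            omega
          have h1 := ih t' hsz (hrec t' ht') x hxl
          have h2 := hlab t' ht'
          simp only [OTree.label] at *
          omega

lemma increasing_le_preorder (t : OTree) (ht : t.Increasing) :
    ∀ x ∈ t.preorder, t.label ≤ x :=
  increasing_le_preorder_aux (sizeOf t) t le_rfl ht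

lemma increasing_lt_preorderF (a : ℕ) (ts : List OTree)
    (ht : (OTree.node a ts).Increasing) : ∀ x ∈ preorderF ts, a < x := by
  intro x hx
  simp only [preorderF, List.mem_flatten] at hx
  obtain ⟨l, hl, hxl⟩ := hx
  rw [List.mem_map] at hl
  obtain ⟨t', ht', rfl⟩ := hl
  cases ht with
  | node _ _ hlab hrec =>
    have h1 := increasing_le_preorder t' (hrec t' ht') x hxl
    have h2 := hlab t' ht'
    omega

/-- The "between" condition on a word. -/
def Between (w : List ℕ) : Prop :=
  ∀ i j k : ℕ, i < j → j < k → k < w.length →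
    w.getD i 0 = w.getD k 0 → w.getD i 0 < w.getD j 0

lemma Between.nil : Between [] := by intro i j k _ _ h; simp at h

lemma between_append {u v : List ℕ} (hu : Between u) (hv : Between v)
    (hdisj : ∀ x, x ∈ u → x ∈ v → False) : Between (u ++ v) := by
  intro i j k hij hjk hk h
  rw [List.length_append] at hk
  by_cases hku : k < u.length
  · -- all in u
    have hju : j < u.length := lt_trans hjk hku
    have hiu : i < u.length := lt_trans hij hju
    rw [List.getD_append _ _ _ _ hiu, List.getD_append _ _ _ _ hju,
      List.getD_append _ _ _ _ hku] at *
    exact hu i j k hij hjk hku h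
  · push_neg at hku
    by_cases hiu : i < u.length
    · -- i in u, k in v
      exfalso
      rw [List.getD_append _ _ _ _ hiu, List.getD_append_right _ _ _ _ hku] at h
      have hmi : u.getD i 0 ∈ u := by
        rw [List.getD_eq_getElem _ _ hiu]; exact List.getElem_mem _
      have hmk : v.getD (k - u.length) 0 ∈ v := by
        have : k - u.length < v.length := by omega
        rw [List.getD_eq_getElem _ _ this]; exact List.getElem_mem _
      exact hdisj _ hmi (h ▸ hmk)
    · -- all in v
      push_neg at hiu
      have hju : u.length ≤ j := le_trans hiu (le_of_lt hij)
      rw [List.getD_append_right _ _ _ _ hiu, List.getD_append_right _ _ _ _ hju,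
        List.getD_append_right _ _ _ _ hku] at *
      exact hv _ _ _ (by omega) (by omega) (by omega) h

lemma getD_wrap_left (a : ℕ) (v : List ℕ) : (a :: v ++ [a]).getD 0 0 = a := by
  rw [List.getD_append]
  · rfl
  · simp

lemma getD_wrap_mid (a : ℕ) (v : List ℕ) {i : ℕ} (h1 : 1 ≤ i) (h2 : i ≤ v.length) :
    (a :: v ++ [a]).getD i 0 = v.getD (i - 1) 0 := by
  rw [List.getD_append _ _ _ _ (by simp; omega)]
  obtain ⟨m, rfl⟩ : ∃ m, i = m + 1 := ⟨i - 1, by omega⟩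
  rw [List.getD_cons_succ]
  simp

lemma getD_wrap_right (a : ℕ) (v : List ℕ) :
    (a :: v ++ [a]).getD (v.length + 1) 0 = a := by
  rw [List.getD_append_right _ _ _ _ (by simp)]
  simp

lemma between_wrap {a : ℕ} {v : List ℕ} (hv : Between v)
    (hlt : ∀ b ∈ v, a < b) : Between (a :: v ++ [a]) := by
  intro i j k hij hjk hk h
  have hlen : (a :: v ++ [a]).length = v.length + 2 := by simp
  rw [hlen] at hk
  have hmem : ∀ m : ℕ, 1 ≤ m → m ≤ v.length → (a :: v ++ [a]).getD m 0 ∈ v := by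
    intro m hm1 hm2
    rw [getD_wrap_mid a v hm1 hm2]
    have : m - 1 < v.length := by omega
    rw [List.getD_eq_getElem _ _ this]
    exact List.getElem_mem _
  rcases Nat.eq_zero_or_pos i with rfl | hi
  · rw [getD_wrap_left] at h ⊢
    rcases eq_or_lt_of_le (show k ≤ v.length + 1 by omega) with hke | hke
    · exact hlt _ (hmem j (by omega) (by omega))
    · exfalso
      have := hlt _ (hmem k (by omega) (by omega))
      rw [← h] at this
      omega
  · have hiv := hmem i hi (by omega)
    rcases eq_or_lt_of_le (show k ≤ v.length + 1 by omega) with hke | hke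
    · exfalso
      rw [hke, getD_wrap_right] at h
      have := hlt _ hiv
      omega
    · have hgi := getD_wrap_mid a v hi (show i ≤ v.length by omega)
      have hgj := getD_wrap_mid a v (show 1 ≤ j by omega) (show j ≤ v.length by omega)
      have hgk := getD_wrap_mid a v (show 1 ≤ k by omega) (show k ≤ v.length by omega)
      rw [hgi, hgk] at h
      rw [hgi, hgj]
      exact hv _ _ _ (by omega) (by omega) (by omega) h

/-- Parse a word into a forest of trees. -/
def parseF : List ℕ → List OTree
  | [] => []
  | a :: rest =>
      OTree.node a (parseF (rest.take (List.idxOf a rest))) ::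
        parseF (rest.drop (List.idxOf a rest + 1))
termination_by w => w.length
decreasing_by
  · simp only [List.length_cons, List.length_take]
    omega
  · simp only [List.length_cons, List.length_drop]
    omega

lemma parseF_nil : parseF [] = [] := by rw [parseF]

lemma parseF_cons (a : ℕ) (rest : List ℕ) :
    parseF (a :: rest) =
      OTree.node a (parseF (rest.take (List.idxOf a rest))) ::
        parseF (rest.drop (List.idxOf a rest + 1)) := by
  rw [parseF]

def OkCounts (w : List ℕ) : Prop := ∀ x, w.count x = 0 ∨ w.count x = 2

lemma roundtrip1 : ∀ (m : ℕ) (w : List ℕ), w.length ≤ m → OkCounts w → Between w →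
    wordF (parseF w) = w ∧ ∀ t ∈ parseF w, t.Increasing := by
  intro m
  induction m with
  | zero =>
      intro w hw _ _
      have : w = [] := List.eq_nil_of_length_eq_zero (by omega)
      subst this
      simp [parseF_nil, wordF]
  | succ m ih =>
      intro w hw hcount hbet
      match w with
      | [] => simp [parseF_nil, wordF]
      | a :: rest =>
        -- the second occurrence of a
        have hc2 : (a :: rest).count a = 2 := by
          rcases hcount a with h | h
          · simp [List.count_cons] at h
          · exact h
        have hcr : rest.count a = 1 := by
          rw [List.count_cons] at hc2; simp at hc2; omega
        have hmem : a ∈ rest := by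
          rw [← List.count_pos_iff]; omega
        set k := List.idxOf a rest with hk
        have hklt : k < rest.length := List.idxOf_lt_length_iff.2 hmem
        have hgetk : rest[k]'hklt = a := List.getElem_idxOf hklt
        set v := rest.take k with hvdef
        set z := rest.drop (k + 1) with hzdef
        have hvlen : v.length = k := by
          rw [hvdef, List.length_take]; omega
        have hdecomp : rest = v ++ a :: z := by
          conv_lhs => rw [← List.take_append_drop k rest]
          rw [List.drop_eq_getElem_cons hklt, hgetk]
        have hwdecomp : a :: rest = (a :: v) ++ a :: z := by
          rw [hdecomp]; simp
        have hzlen : z.length = rest.length - (k + 1) := by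
          rw [hzdef, List.length_drop]
        -- getD facts in w = a :: v ++ a :: z
        have hgd0 : (a :: rest).getD 0 0 = a := rfl
        have hgdv : ∀ i, i < v.length → (a :: rest).getD (i + 1) 0 = v.getD i 0 := by
          intro i hi
          rw [List.getD_cons_succ, hdecomp, List.getD_append _ _ _ _ hi]
        have hgdmid : (a :: rest).getD (v.length + 1) 0 = a := by
          rw [List.getD_cons_succ, hdecomp, List.getD_append_right _ _ _ _ le_rfl]
          simp
        have hgdz : ∀ i, i < z.length →
            (a :: rest).getD (v.length + 2 + i) 0 = z.getD i 0 := by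
          intro i hi
          rw [show v.length + 2 + i = (v.length + 1 + i) + 1 by omega,
            List.getD_cons_succ, hdecomp,
            List.getD_append_right _ _ _ _ (by omega)]
          rw [show v.length + 1 + i - v.length = i + 1 by omega, List.getD_cons_succ]
        have hlenw : (a :: rest).length = v.length + 2 + z.length := by
          simp only [List.length_cons, hdecomp, List.length_append]
          omega
        -- all elements of v exceed a
        have hbv : ∀ b ∈ v, a < b := by
          intro b hb
          obtain ⟨i, hi, rfl⟩ := List.getElem_of_mem hb
          have := hbet 0 (i + 1) (v.length + 1) (by omega) (by omega)
            (by omega) (by rw [hgd0, hgdmid])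
          rw [hgd0, hgdv i hi] at this
          rwa [List.getD_eq_getElem _ _ hi] at this
        have hav : a ∉ v := fun h => lt_irrefl a (hbv a h)
        have haz : a ∉ z := by
          intro h
          have : rest.count a ≥ 2 := by
            rw [hdecomp, List.count_append, List.count_cons]
            have := List.count_pos_iff.2 h
            simp only [beq_self_eq_true, if_pos]
            omega
          omega
        -- no value occurs once in v and once in z
        have hcross : ∀ x, x ∈ v → x ∈ z → False := by
          intro x hxv hxz
          obtain ⟨i, hi, rfl⟩ := List.getElem_of_mem hxv
          obtain ⟨j, hj, hj'⟩ := List.getElem_of_mem hxz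
          have hbig := hbet (i + 1) (v.length + 1) (v.length + 2 + j)
            (by omega) (by omega) (by omega)
          rw [hgdv i hi, hgdmid, hgdz j hj] at hbig
          rw [List.getD_eq_getElem _ _ hi, List.getD_eq_getElem _ _ hj] at hbig
          have h1 := hbig (by rw [hj'])
          have h2 := hbv _ (List.getElem_mem hi)
          omega
        -- counts
        have hcnt : ∀ x, (a :: rest).count x
            = v.count x + z.count x + (if x = a then 2 else 0) := by
          intro x
          rw [hwdecomp]
          rcases eq_or_ne x a with rfl | hne
          · simp only [List.count_append, List.count_cons, beq_iff_eq, if_pos rfl,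
              if_true]
            omega
          · simp only [List.count_append, List.count_cons, beq_iff_eq,
              if_neg (Ne.symm hne), if_neg hne]
            omega
        have hcv : OkCounts v := by
          intro x
          rcases eq_or_ne x a with rfl | hne
          · left; exact List.count_eq_zero.2 hav
          · have h0 := hcnt x
            rcases hcount x with h | h <;> rw [h] at h0
            · left; omega
            · by_contra hcon
              push_neg at hcon
              have h1 : v.count x = 1 := by simp [hne] at h0; omega
              have h2 : z.count x = 1 := by simp [hne] at h0; omega
              exact hcross x (List.count_pos_iff.1 (by omega))
                (List.count_pos_iff.1 (by omega))
        have hcz : OkCounts z := by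
          intro x
          rcases eq_or_ne x a with rfl | hne
          · left; exact List.count_eq_zero.2 haz
          · have h0 := hcnt x
            rcases hcv x with h | h <;> rcases hcount x with h' | h' <;>
              rw [h'] at h0 <;> simp [hne] at h0 <;> omega
        -- Between for v and z
        have hbv' : Between v := by
          intro i j k hij hjk hkl h
          have := hbet (i + 1) (j + 1) (k + 1) (by omega) (by omega) (by omega)
          rw [hgdv i (by omega), hgdv j (by omega), hgdv k (by omega)] at this
          exact this h
        have hbz' : Between z := by
          intro i j k hij hjk hkl h
          have := hbet (v.length + 2 + i) (v.length + 2 + j) (v.length + 2 + k)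
            (by omega) (by omega) (by omega)
          rw [hgdz i (by omega), hgdz j (by omega), hgdz k (by omega)] at this
          exact this h
        have hvsmall : v.length ≤ m := by
          simp only [List.length_cons] at hw
          omega
        have hzsmall : z.length ≤ m := by
          simp only [List.length_cons] at hw
          omega
        obtain ⟨ihv1, ihv2⟩ := ih v hvsmall hcv hbv'
        obtain ⟨ihz1, ihz2⟩ := ih z hzsmall hcz hbz'
        rw [parseF_cons]
        constructor
        · rw [wordF_cons, wordT_node, ← hk, ← hvdef, ← hzdef, ihv1, ihz1, hdecomp]
          simp
        · intro t ht
          rw [List.mem_cons] at ht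
          rcases ht with ht | ht
          · subst ht
            constructor
            · intro t' ht'
              have : t'.label ∈ wordF (parseF v) := by
                rw [wordF, List.mem_flatten]
                refine ⟨wordT t', List.mem_map_of_mem ht', ?_⟩
                obtain ⟨b, ts'⟩ := t'
                rw [wordT_node]
                simp [OTree.label]
              rw [ihv1] at this
              exact hbv _ this
            · exact ihv2
          · exact ihz2 t ht

lemma mem_of_getLast? : ∀ {l : List ℕ} {x : ℕ}, l.getLast? = some x → x ∈ l := by
  intro l
  induction l with
  | nil => simp
  | cons a l ih =>
      intro x h
      cases l with
      | nil => simp_all [List.getLast?]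
      | cons b r =>
          rw [List.getLast?_cons_cons] at h
          exact List.mem_cons_of_mem _ (ih h)

lemma mem_wordT_iff (t : OTree) (x : ℕ) : x ∈ wordT t ↔ x ∈ t.preorder := by
  rw [← List.count_pos_iff, ← List.count_pos_iff, count_wordT]
  omega

lemma wordT_ne_nil (t : OTree) : wordT t ≠ [] := by
  obtain ⟨a, ts⟩ := t
  rw [wordT_node]
  simp

lemma head?_wordT (t : OTree) : (wordT t).head? = some t.label := by
  obtain ⟨a, ts⟩ := t
  rw [wordT_node, List.head?_append_of_ne_nil _ (by simp)]
  rfl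

lemma getLast?_wordT (t : OTree) : (wordT t).getLast? = some t.label := by
  obtain ⟨a, ts⟩ := t
  rw [wordT_node]
  rw [show a :: wordF ts ++ [a] = (a :: wordF ts) ++ [a] by simp,
    List.getLast?_concat]
  rfl

lemma wordF_ne_nil {F : List OTree} (h : F ≠ []) : wordF F ≠ [] := by
  cases F with
  | nil => exact absurd rfl h
  | cons t F =>
      rw [wordF_cons]
      intro hc
      exact wordT_ne_nil t (List.append_eq_nil_iff.1 hc).1

lemma head?_wordF_mem {F : List OTree} {y : ℕ} (h : (wordF F).head? = some y) :
    ∃ t ∈ F, y = t.label := by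
  cases F with
  | nil => simp [wordF] at h
  | cons t F =>
      rw [wordF_cons, List.head?_append_of_ne_nil _ (wordT_ne_nil t),
        head?_wordT] at h
      exact ⟨t, List.mem_cons_self, (Option.some_inj.1 h).symm⟩

lemma getLast?_wordF_mem : ∀ {F : List OTree} {y : ℕ},
    (wordF F).getLast? = some y → ∃ t ∈ F, y = t.label := by
  intro F
  induction F with
  | nil => simp [wordF]
  | cons t F ih =>
      intro y h
      cases F with
      | nil =>
          rw [wordF_cons, wordF, List.map_nil, List.flatten_nil, List.append_nil,
            getLast?_wordT] at h
          exact ⟨t, List.mem_cons_self, (Option.some_inj.1 h).symm⟩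
      | cons t' F' =>
          rw [wordF_cons, List.getLast?_append] at h
          have hne := wordF_ne_nil (show t' :: F' ≠ [] by simp)
          have : (wordF (t' :: F')).getLast? ≠ none := by
            simpa [List.getLast?_eq_none_iff] using hne
          rcases ho : (wordF (t' :: F')).getLast? with _ | z
          · exact absurd ho this
          · rw [ho] at h
            simp only [Option.some_or, Option.some_inj] at h
            subst h
            obtain ⟨u, hu, hz⟩ := ih ho
            exact ⟨u, List.mem_cons_of_mem _ hu, hz⟩

lemma between_wordF : ∀ (F : List OTree), (∀ t ∈ F, t.Increasing) →
    (preorderF F).Nodup → Between (wordF F) := by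
  intro F
  match F with
  | [] =>
      intro _ _
      simpa [wordF] using Between.nil
  | (OTree.node a ts) :: F' =>
      intro hinc hnd
      rw [preorderF_cons, preorder_node, List.nodup_append] at hnd
      obtain ⟨hnd1, hnd2, hdisj⟩ := hnd
      have hta := hinc _ (List.mem_cons_self)
      have htsinc : ∀ t ∈ ts, t.Increasing := by
        cases hta with | node _ _ _ h => exact h
      have hbts : Between (wordF ts) :=
        between_wordF ts htsinc (List.Nodup.of_cons hnd1)
      have hbF' : Between (wordF F') :=
        between_wordF F' (fun t ht => hinc t (List.mem_cons_of_mem _ ht)) hnd2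
      rw [wordF_cons, wordT_node]
      refine between_append ?_ hbF' ?_
      · apply between_wrap hbts
        intro b hb
        rw [mem_wordF_iff] at hb
        exact increasing_lt_preorderF a ts hta b hb
      · intro x hx hx'
        rw [show (a :: wordF ts ++ [a]) = wordT (OTree.node a ts) by
          rw [wordT_node], mem_wordT_iff, preorder_node] at hx
        rw [mem_wordF_iff] at hx'
        exact hdisj _ hx _ hx' rfl
termination_by F => sizeOf F
decreasing_by
  all_goals simp only [List.cons.sizeOf_spec, OTree.node.sizeOf_spec] <;> omega

lemma roundtrip2 : ∀ (F : List OTree), (∀ t ∈ F, t.Increasing) →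
    parseF (wordF F) = F := by
  intro F
  match F with
  | [] => intro _; simp [wordF, parseF_nil]
  | (OTree.node a ts) :: F' =>
      intro hinc
      have hta := hinc _ (List.mem_cons_self)
      have htsinc : ∀ t ∈ ts, t.Increasing := by
        cases hta with | node _ _ _ h => exact h
      have hnotmem : a ∉ wordF ts := by
        intro h
        rw [mem_wordF_iff] at h
        exact lt_irrefl a (increasing_lt_preorderF a ts hta a h)
      have hidx : ∀ (u z : List ℕ), a ∉ u → List.idxOf a (u ++ a :: z) = u.length := by
        intro u
        induction u with
        | nil => intro z _; simpa using List.idxOf_cons_self (a := a) (l := z)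
        | cons b u ih =>
            intro z h
            rw [List.cons_append, List.idxOf_cons_ne _ (by
              intro hc; exact h (hc ▸ List.mem_cons_self)),
              ih z (fun hc => h (List.mem_cons_of_mem _ hc))]
            rfl
      rw [wordF_cons, wordT_node,
        show (a :: wordF ts ++ [a]) ++ wordF F' = a :: (wordF ts ++ a :: wordF F') by
          simp,
        parseF_cons, hidx _ _ hnotmem, List.take_left,
        show wordF ts ++ a :: wordF F' = (wordF ts ++ [a]) ++ wordF F' by simp,
        show (wordF ts).length + 1 = (wordF ts ++ [a]).length by simp,
        List.drop_left, roundtrip2 ts htsinc,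
        roundtrip2 F' (fun t ht => hinc t (List.mem_cons_of_mem _ ht))]
termination_by F => sizeOf F
decreasing_by
  all_goals simp only [List.cons.sizeOf_spec, OTree.node.sizeOf_spec] <;> omega

def plats : List ℕ → List ℕ
  | a :: b :: r => if a = b then a :: plats (b :: r) else plats (b :: r)
  | _ => []

@[simp] lemma plats_nil : plats [] = [] := rfl
@[simp] lemma plats_single (a : ℕ) : plats [a] = [] := rfl
lemma plats_cons_cons (a b : ℕ) (r : List ℕ) :
    plats (a :: b :: r) = if a = b then a :: plats (b :: r) else plats (b :: r) := rfl

lemma mem_plats : ∀ (w : List ℕ) (x : ℕ), x ∈ plats w →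
    ∃ j, j + 1 < w.length ∧ w.getD j 0 = x ∧ w.getD (j + 1) 0 = x := by
  intro w
  induction w with
  | nil => simp
  | cons a w ih =>
      cases w with
      | nil => simp
      | cons b r =>
          intro x hx
          rw [plats_cons_cons] at hx
          by_cases hab : a = b
          · rw [if_pos hab] at hx
            rcases List.mem_cons.1 hx with rfl | hx
            · exact ⟨0, by simp, rfl, by simp [hab]⟩
            · obtain ⟨j, hj, h1, h2⟩ := ih x hx
              exact ⟨j + 1, by simpa using hj, by simpa using h1, by simpa using h2⟩
          · rw [if_neg hab] at hx
            obtain ⟨j, hj, h1, h2⟩ := ih x hx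
            exact ⟨j + 1, by simpa using hj, by simpa using h1, by simpa using h2⟩

lemma plat_mem : ∀ (w : List ℕ) (j : ℕ), j + 1 < w.length →
    w.getD j 0 = w.getD (j + 1) 0 → w.getD j 0 ∈ plats w := by
  intro w
  induction w with
  | nil => intro j h; simp at h
  | cons a w ih =>
      intro j hj heq
      cases w with
      | nil => simp at hj
      | cons b r =>
          rw [plats_cons_cons]
          cases j with
          | zero =>
              have : a = b := by simpa using heq
              rw [if_pos this]
              simpa using List.mem_cons_self a _
          | succ j =>
              have hj' : j + 1 < (b :: r).length := by simpa using hj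
              have heq' : (b :: r).getD j 0 = (b :: r).getD (j + 1) 0 := by
                simpa using heq
              have := ih j hj' heq'
              rw [List.getD_cons_succ]
              by_cases hab : a = b
              · rw [if_pos hab]; exact List.mem_cons_of_mem _ this
              · rw [if_neg hab]; exact this

lemma hip_tail {a : ℕ} {w : List ℕ} (h : HasIncPlateaus (a :: w)) :
    HasIncPlateaus w := by
  intro i j hij hj h1 h2
  have := h (i + 1) (j + 1) (by omega) (by simpa using by omega)
  simp only [List.getD_cons_succ] at this
  exact this h1 h2

lemma sorted_plats_of_hip : ∀ (w : List ℕ), HasIncPlateaus w →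
    (plats w).Pairwise (· < ·) := by
  intro w
  induction w with
  | nil => simp
  | cons a w ih =>
      intro h
      cases w with
      | nil => simp
      | cons b r =>
          have htail := ih (hip_tail h)
          rw [plats_cons_cons]
          by_cases hab : a = b
          · rw [if_pos hab]
            rw [List.pairwise_cons]
            refine ⟨?_, htail⟩
            intro x hx
            obtain ⟨j, hj, h1, h2⟩ := mem_plats _ x hx
            have := h 0 (j + 1) (by omega) (by simpa using hj)
              (by simp [hab]) (by simpa using h1.trans h2.symm)
            rw [List.getD_cons_succ, h1] at this
            simpa using this
          · rw [if_neg hab]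
            exact htail

lemma hip_of_sorted_plats : ∀ (w : List ℕ), (plats w).Pairwise (· < ·) →
    HasIncPlateaus w := by
  intro w
  induction w with
  | nil => intro _ i j _ hj; simp at hj
  | cons a w ih =>
      intro h
      cases w with
      | nil => intro i j _ hj; simp at hj
      | cons b r =>
          have htail : HasIncPlateaus (b :: r) := by
            apply ih
            rw [plats_cons_cons] at h
            by_cases hab : a = b
            · rw [if_pos hab, List.pairwise_cons] at h; exact h.2
            · rwa [if_neg hab] at h
          intro i j hij hj h1 h2
          cases i with
          | succ i =>
              obtain ⟨j', rfl⟩ : ∃ j', j = j' + 1 := ⟨j - 1, by omega⟩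
              simp only [List.getD_cons_succ] at h1 h2 ⊢
              exact htail i j' (by omega) (by simpa using hj) h1 h2
          | zero =>
              have hab : a = b := by simpa using h1
              obtain ⟨j', rfl⟩ : ∃ j', j = j' + 1 := ⟨j - 1, by omega⟩
              simp only [List.getD_cons_succ] at h2 ⊢
              have hmem : (b :: r).getD j' 0 ∈ plats (b :: r) :=
                plat_mem _ j' (by simpa using hj) h2
              rw [plats_cons_cons, if_pos hab, List.pairwise_cons] at h
              have := h.1 _ hmem
              simpa using this

lemma plats_cons_ne {a y : ℕ} {w : List ℕ} (h : w.head? = some y) (hne : a ≠ y) :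
    plats (a :: w) = plats w := by
  cases w with
  | nil => simp at h
  | cons b r =>
      have : b = y := by simpa using h
      subst this
      rw [plats_cons_cons, if_neg hne]

lemma plats_append : ∀ (u v : List ℕ),
    (∀ x y, u.getLast? = some x → v.head? = some y → x ≠ y) →
    plats (u ++ v) = plats u ++ plats v := by
  intro u
  induction u with
  | nil => intro v _; simp
  | cons a u ih =>
      intro v hb
      cases u with
      | nil =>
          cases v with
          | nil => simp
          | cons c v' =>
              have hac : a ≠ c := hb a c (by simp) (by simp)
              simp only [List.singleton_append, plats_single, List.nil_append]
              rw [plats_cons_cons, if_neg hac]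
      | cons b u' =>
          have hih := ih v (fun x y hx hy =>
            hb x y (by rwa [List.getLast?_cons_cons]) hy)
          simp only [List.cons_append] at hih ⊢
          rw [plats_cons_cons, plats_cons_cons]
          by_cases hab : a = b
          · rw [if_pos hab, if_pos hab, hih]
            simp
          · rw [if_neg hab, if_neg hab, hih]

lemma plats_wordF : ∀ (F : List OTree), (∀ t ∈ F, t.Increasing) →
    (preorderF F).Nodup → plats (wordF F) = leavesF F := by
  intro F
  match F with
  | [] => intro _ _; simp [wordF, leavesF]
  | (OTree.node a ts) :: F' =>
      intro hinc hnd
      rw [preorderF_cons, preorder_node, List.nodup_append] at hnd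
      obtain ⟨hnd1, hnd2, hdisj⟩ := hnd
      have hta := hinc _ (List.mem_cons_self)
      have htsinc : ∀ t ∈ ts, t.Increasing := by
        cases hta with | node _ _ _ h => exact h
      rw [wordF_cons, leavesF_cons]
      rw [plats_append (wordT (OTree.node a ts)) (wordF F') ?bd]
      case bd =>
        intro x y hx hy
        rw [getLast?_wordT] at hx
        have hxa : x = a := (Option.some_inj.1 hx).symm
        subst hxa
        obtain ⟨t', ht', rfl⟩ := head?_wordF_mem hy
        intro hxy
        refine hdisj _ List.mem_cons_self _ ?_ rfl
        rw [hxy]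
        rw [preorderF, List.mem_flatten]
        exact ⟨t'.preorder, List.mem_map_of_mem ht', label_mem_preorder t'⟩
      rw [plats_wordF F' (fun t ht => hinc t (List.mem_cons_of_mem _ ht)) hnd2]
      congr 1
      -- plats (wordT (node a ts)) = (node a ts).leaves
      rw [wordT_node, leaves_node]
      cases hts : ts.isEmpty
      case true =>
        rw [if_pos rfl]
        have : ts = [] := List.isEmpty_iff.1 hts
        subst this
        simp only [wordF, List.map_nil, List.flatten_nil, List.nil_append]
        rw [show ([a] ++ [a] : List ℕ) = a :: [a] by simp] at *
        rw [plats_cons_cons, if_pos rfl]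
        simp
      case false =>
        rw [if_neg (by simp)]
        have htsne : ts ≠ [] := by
          intro hc; subst hc; simp at hts
        have hwne : wordF ts ≠ [] := wordF_ne_nil htsne
        have hhd : ∃ y, (wordF ts).head? = some y := by
          cases hw : (wordF ts).head? with
          | none => exact absurd (List.head?_eq_none_iff.1 hw) hwne
          | some y => exact ⟨y, rfl⟩
        obtain ⟨y, hy⟩ := hhd
        obtain ⟨t1, ht1, rfl⟩ := head?_wordF_mem hy
        have hlab_gt : ∀ b ∈ wordF ts, a < b := by
          intro b hb
          rw [mem_wordF_iff] at hb
          exact increasing_lt_preorderF a ts hta b hb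
        have hya : a ≠ t1.label := by
          have hm : t1.label ∈ (wordF ts).head? := by rw [hy]; rfl
          have := hlab_gt _ (List.mem_of_mem_head? hm)
          omega
        rw [show (a :: wordF ts ++ [a] : List ℕ) = a :: (wordF ts ++ [a]) by simp]
        rw [plats_cons_ne (by rw [List.head?_append_of_ne_nil _ hwne, hy]) hya]
        rw [plats_append (wordF ts) [a] ?bd2]
        case bd2 =>
          intro x y' hx hy'
          have hy'a : y' = a := by
            have := hy'
            simp at this
            omega
          subst hy'a
          have := hlab_gt x (mem_of_getLast? hx)
          omega
        rw [plats_single, List.append_nil]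
        exact plats_wordF ts htsinc (List.Nodup.of_cons hnd1)
termination_by F => sizeOf F
decreasing_by
  all_goals simp only [List.cons.sizeOf_spec, OTree.node.sizeOf_spec] <;> omega

lemma label_mem_wordF {t : OTree} {F : List OTree} (h : t ∈ F) :
    t.label ∈ wordF F := by
  rw [mem_wordF_iff, preorderF, List.mem_flatten]
  exact ⟨t.preorder, List.mem_map_of_mem h, label_mem_preorder t⟩

lemma okCounts_of_double {n : ℕ} {l : List ℕ} (h : IsDoubleMultiset n l) :
    OkCounts l := by
  intro x
  rcases h x with h'
  split_ifs at h' <;> omega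

lemma between_of_stirling {n : ℕ} {l : List ℕ} (h : IsStirlingPerm n l) :
    Between l := by
  intro i j k hij hjk hk heq
  have hj : j < l.length := by omega
  have hi : i < l.length := by omega
  rw [List.getD_eq_getElem _ _ hi, List.getD_eq_getElem _ _ hj,
    List.getD_eq_getElem _ _ hk] at *
  exact h.2 ⟨i, hi⟩ ⟨j, hj⟩ ⟨k, hk⟩ hij hjk heq

lemma count_range' (n x : ℕ) :
    (List.range n).count x = if x < n then 1 else 0 := by
  by_cases hx : x < n
  · rw [if_pos hx]
    exact List.count_eq_one_of_mem (List.nodup_range) (List.mem_range.2 hx)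
  · rw [if_neg hx]
    exact List.count_eq_zero_of_not_mem (by simpa using hx)

/-- Forward direction facts. -/
lemma fwd {n : ℕ} (hn : 1 ≤ n) {a : ℕ} {ts : List OTree}
    (h : IsIncOrdTree n (OTree.node a ts) ∧ HasIncLeaves (OTree.node a ts)) :
    IsStirlingPerm n (wordF ts) ∧ HasIncPlateaus (wordF ts) := by
  obtain ⟨⟨hlab, hperm, hinc⟩, hleaves⟩ := h
  have ha : a = 0 := hlab
  subst ha
  rw [preorder_node] at hperm
  have hnd : (0 :: preorderF ts).Nodup :=
    hperm.nodup_iff.2 (List.nodup_range)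
  have hnd' : (preorderF ts).Nodup := List.Nodup.of_cons hnd
  have htsinc : ∀ t ∈ ts, t.Increasing := by
    cases hinc with | node _ _ _ h => exact h
  have hcnt : ∀ x, (preorderF ts).count x = if 1 ≤ x ∧ x ≤ n then 1 else 0 := by
    intro x
    have h0 := hperm.count_eq x
    rw [count_range'] at h0
    rw [List.count_cons] at h0
    rcases eq_or_ne x 0 with rfl | hne
    · simp at h0 ⊢
      omega
    · simp [Ne.symm hne] at h0
      split_ifs at h0 ⊢ <;> omega
  have hdm : IsDoubleMultiset n (wordF ts) := by
    intro x
    rw [count_wordF, hcnt]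
    split_ifs <;> omega
  have hbet : Between (wordF ts) := between_wordF ts htsinc hnd'
  have htsne : ts ≠ [] := by
    intro hc
    subst hc
    have := hperm.length_eq
    simp [preorderF] at this
    omega
  have hleq : (OTree.node 0 ts).leaves = leavesF ts := by
    rw [leaves_node, if_neg (by simpa using htsne)]
  have hplats : plats (wordF ts) = leavesF ts := plats_wordF ts htsinc hnd'
  refine ⟨⟨hdm, ?_⟩, ?_⟩
  · intro i j k hij hjk heq
    have := hbet i j k hij hjk k.isLt
    rw [List.getD_eq_getElem _ _ i.isLt, List.getD_eq_getElem _ _ j.isLt,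
      List.getD_eq_getElem _ _ k.isLt] at this
    exact this heq
  · apply hip_of_sorted_plats
    rw [hplats, ← hleq]
    exact hleaves

/-- Backward direction facts. -/
lemma bwd {n : ℕ} (hn : 1 ≤ n) {l : List ℕ}
    (h : IsStirlingPerm n l ∧ HasIncPlateaus l) :
    IsIncOrdTree n (OTree.node 0 (parseF l)) ∧
      HasIncLeaves (OTree.node 0 (parseF l)) := by
  obtain ⟨⟨hdm, hfin⟩, hplat⟩ := h
  have hok : OkCounts l := okCounts_of_double hdm
  have hbet : Between l := between_of_stirling ⟨hdm, hfin⟩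
  obtain ⟨hw, hincs⟩ := roundtrip1 l.length l le_rfl hok hbet
  have hlne : l ≠ [] := by
    intro hc
    have := hdm 1
    rw [hc] at this
    simp [hn] at this
  have hcntpre : ∀ x, (preorderF (parseF l)).count x
      = if 1 ≤ x ∧ x ≤ n then 1 else 0 := by
    intro x
    have h1 := count_wordF (parseF l) x
    rw [hw, hdm x] at h1
    split_ifs at h1 ⊢ <;> omega
  have hndpre : (preorderF (parseF l)).Nodup := by
    rw [List.nodup_iff_count_le_one]
    intro x
    rw [hcntpre]
    split_ifs <;> omega
  have hFne : parseF l ≠ [] := by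
    intro hc
    rw [hc] at hw
    exact hlne (hw.symm.trans (by simp [wordF]))
  have hplats : plats (wordF (parseF l)) = leavesF (parseF l) :=
    plats_wordF (parseF l) hincs hndpre
  refine ⟨⟨rfl, ?_, ?_⟩, ?_⟩
  · rw [preorder_node, List.perm_iff_count]
    intro x
    rw [count_range', List.count_cons, hcntpre]
    rcases eq_or_ne x 0 with rfl | hne
    · simp
    · simp only [beq_iff_eq, if_neg (Ne.symm hne), Nat.add_zero]
      split_ifs <;> omega
  · constructor
    · intro t' ht'
      have hmem : t'.label ∈ l := by
        rw [← hw]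
        exact label_mem_wordF ht'
      have := hdm t'.label
      have hpos := List.count_pos_iff.2 hmem
      by_contra hc
      push_neg at hc
      have h0 : t'.label = 0 := by omega
      rw [h0] at hpos
      have h1 := hdm 0
      simp at h1
      omega
    · exact hincs
  · unfold HasIncLeaves
    rw [leaves_node, if_neg (by simpa using hFne)]
    rw [← hplats, hw]
    exact sorted_plats_of_hip l hplat

end SP

theorem stmt13 (n : ℕ) (hn : 1 ≤ n) :
    Nat.card {t : OTree // IsIncOrdTree n t ∧ HasIncLeaves t}
      = Nat.card {l : List ℕ // IsStirlingPerm n l ∧ HasIncPlateaus l} := by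
  apply Nat.card_congr
  refine ⟨fun p => ⟨SP.wordF p.1.children, ?_⟩,
    fun q => ⟨OTree.node 0 (SP.parseF q.1), SP.bwd hn q.2⟩, ?_, ?_⟩
  · obtain ⟨⟨a, ts⟩, hp⟩ := p
    exact SP.fwd hn hp
  · rintro ⟨⟨a, ts⟩, ⟨⟨hlab, hperm, hinc⟩, hleaves⟩⟩
    have ha : a = 0 := hlab
    subst ha
    apply Subtype.ext
    simp only [OTree.children]
    have htsinc : ∀ t ∈ ts, t.Increasing := by
      cases hinc with | node _ _ _ h => exact h
    rw [SP.roundtrip2 ts htsinc]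
  · rintro ⟨l, ⟨⟨hdm, hfin⟩, hplat⟩⟩
    apply Subtype.ext
    simp only [OTree.children]
    exact (SP.roundtrip1 l.length l le_rfl (SP.okCounts_of_double hdm)
      (SP.between_of_stirling ⟨hdm, hfin⟩)).1
end
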